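/- arXiv:1308.5877 — 4 statements merged into one kernel-verified Lean document; each statement's English description precedes it below -/
import Mathlib

section
/- Let (X,d,μ) be a non-homogeneous metric measure space, α ∈ (0,1), p ∈ (1,1/α) and ρ ∈ [5,∞). Then there exists a constant C > 0 such that for all f ∈ L^p(μ) and all t > 0, μ({x ∈ X : M^{(α)}_{p,ρ} f(x) > t}) ≤ C (‖f‖_{L^p(μ)}/t)^{p/(1−αp)}. -/
open MeasureTheory Metric Set Filter ENNReal NNReal

noncomputable section

namespace NonHomog

/-- Geometric doubling with constant `N₀`: every ball can be covered by at most `N₀`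
balls of half the radius. -/
def GeomDoublingWith (X : Type*) [MetricSpace X] (N₀ : ℕ) : Prop :=
  ∀ (x : X) (r : ℝ), ∃ s : Finset X,
    s.card ≤ N₀ ∧ Metric.ball x r ⊆ ⋃ y ∈ s, Metric.ball y (r / 2)

/-- `(X, d)` is geometrically doubling. -/
def GeomDoubling (X : Type*) [MetricSpace X] : Prop :=
  ∃ N₀ : ℕ, GeomDoublingWith X N₀

/-- `μ` is upper doubling with dominating function `Λ` and constant `Cl`. -/
structure UpperDoubling {X : Type*} [MetricSpace X] [MeasurableSpace X]
    (μ : MeasureTheory.Measure X) (Λ : X → ℝ → ℝ) (Cl : ℝ) : Prop where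
  one_le : 1 ≤ Cl
  pos : ∀ (x : X) (r : ℝ), 0 < r → 0 < Λ x r
  mono : ∀ x : X, MonotoneOn (Λ x) (Set.Ioi (0 : ℝ))
  measure_ball_le : ∀ (x : X) (r : ℝ), 0 < r →
    μ (Metric.ball x r) ≤ ENNReal.ofReal (Λ x r)
  le_mul_half : ∀ (x : X) (r : ℝ), 0 < r → Λ x r ≤ Cl * Λ x (r / 2)
  compat : ∀ (x y : X) (r : ℝ), 0 < r → dist x y ≤ r → Λ x r ≤ Cl * Λ y r

/-- Conditions (1.7) and (1.8) for the kernel `K` with size constant `CK` and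
regularity exponent `δ`. -/
structure IsFracKernel {X : Type*} [MetricSpace X] (Λ : X → ℝ → ℝ) (α : ℝ)
    (K : X → X → ℝ) (CK δ : ℝ) : Prop where
  CK_pos : 0 < CK
  delta_pos : 0 < δ
  delta_le_one : δ ≤ 1
  size : ∀ x y : X, x ≠ y → |K x y| ≤ CK * Λ x (dist x y) ^ (α - 1)
  smooth : ∀ x x' y : X, 2 * dist x x' ≤ dist x y →
    |K x y - K x' y| + |K y x - K y x'| ≤
      CK * dist x x' ^ δ * dist x y ^ (-δ) * Λ x (dist x y) ^ (α - 1)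

/-- `T` is a generalized fractional integral associated with the kernel `K`. -/
structure IsGenFracIntegral {X : Type*} [MetricSpace X] [MeasurableSpace X]
    (μ : MeasureTheory.Measure X) (K : X → X → ℝ) (T : (X → ℝ) → X → ℝ) : Prop where
  map_add : ∀ f g : X → ℝ, T (f + g) = T f + T g
  map_smul : ∀ (c : ℝ) (f : X → ℝ), T (c • f) = c • T f
  eq_integral : ∀ f : X → ℝ, (∃ M : ℝ, ∀ x, |f x| ≤ M) →
    Bornology.IsBounded (Function.support f) →
    ∀ x : X, x ∉ Function.support f → T f x = ∫ y, K x y * f y ∂μ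

/-- `T` is bounded from `L^p(μ)` to `L^q(μ)` with constant `C`. -/
def BddLpLqWith {X : Type*} [MeasurableSpace X] (μ : MeasureTheory.Measure X)
    (T : (X → ℝ) → X → ℝ) (p q C : ℝ) : Prop :=
  ∀ f : X → ℝ, MeasureTheory.MemLp f (ENNReal.ofReal p) μ →
    MeasureTheory.eLpNorm (T f) (ENNReal.ofReal q) μ ≤
      ENNReal.ofReal C * MeasureTheory.eLpNorm f (ENNReal.ofReal p) μ

/-- The coefficient `K_{B,S}` for balls `B = B(xB,rB) ⊆ S = B(xS,rS)`. -/
def Kcoef {X : Type*} [MetricSpace X] [MeasurableSpace X] (μ : MeasureTheory.Measure X)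
    (Λ : X → ℝ → ℝ) (xB : X) (rB : ℝ) (xS : X) (rS : ℝ) : ℝ :=
  1 + ∫ z in Metric.ball xS (2 * rS) \ Metric.ball xB rB, (Λ xB (dist z xB))⁻¹ ∂μ

/-- The function `f` satisfies the `RBMO(μ)` conditions with constant `C`. -/
def RBMOBoundWith {X : Type*} [MetricSpace X] [MeasurableSpace X]
    (μ : MeasureTheory.Measure X) (Λ : X → ℝ → ℝ) (f : X → ℝ) (C : ℝ) : Prop :=
  ∃ fB : X → ℝ → ℝ,
    (∀ (x : X) (r : ℝ), 0 < r →
      ∫ y in Metric.ball x r, |f y - fB x r| ∂μ ≤ C * (μ (Metric.ball x (2 * r))).toReal) ∧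
    (∀ (x : X) (r : ℝ) (x' : X) (r' : ℝ), 0 < r → 0 < r' →
      Metric.ball x r ⊆ Metric.ball x' r' →
      |fB x r - fB x' r'| ≤ C * Kcoef μ Λ x r x' r')

/-- `f ∈ RBMO(μ)`. -/
def MemRBMO {X : Type*} [MetricSpace X] [MeasurableSpace X]
    (μ : MeasureTheory.Measure X) (Λ : X → ℝ → ℝ) (f : X → ℝ) : Prop :=
  ∃ C : ℝ, 0 ≤ C ∧ RBMOBoundWith μ Λ f C

/-- The `RBMO(μ)` norm of `f`. -/
def RBMONorm {X : Type*} [MetricSpace X] [MeasurableSpace X]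
    (μ : MeasureTheory.Measure X) (Λ : X → ℝ → ℝ) (f : X → ℝ) : ℝ :=
  sInf {C : ℝ | 0 ≤ C ∧ RBMOBoundWith μ Λ f C}

/-- `b` is an `(∞,1)_λ`-atomic block with `|b|_{H¹} = c`. -/
def IsAtomicBlock {X : Type*} [MetricSpace X] [MeasurableSpace X]
    (μ : MeasureTheory.Measure X) (Λ : X → ℝ → ℝ) (b : X → ℝ) (c : ℝ) : Prop :=
  ∃ (xR : X) (rR : ℝ) (l₁ l₂ : ℝ) (a₁ a₂ : X → ℝ) (x₁ x₂ : X) (r₁ r₂ : ℝ),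
    0 < rR ∧ 0 < r₁ ∧ 0 < r₂ ∧
    Function.support b ⊆ Metric.ball xR rR ∧
    MeasureTheory.Integrable b μ ∧ (∫ x, b x ∂μ) = 0 ∧
    (∀ x, b x = l₁ * a₁ x + l₂ * a₂ x) ∧
    Function.support a₁ ⊆ Metric.ball x₁ r₁ ∧
    Function.support a₂ ⊆ Metric.ball x₂ r₂ ∧
    Metric.ball x₁ r₁ ⊆ Metric.ball xR rR ∧
    Metric.ball x₂ r₂ ⊆ Metric.ball xR rR ∧
    (∀ x, |a₁ x| ≤ ((μ (Metric.ball x₁ (4 * r₁))).toReal * Kcoef μ Λ x₁ r₁ xR rR)⁻¹) ∧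
    (∀ x, |a₂ x| ≤ ((μ (Metric.ball x₂ (4 * r₂))).toReal * Kcoef μ Λ x₂ r₂ xR rR)⁻¹) ∧
    c = |l₁| + |l₂|

/-- The set of sums `Σᵢ |bᵢ|_{H¹}` over atomic block decompositions of `f`. -/
def H1NormSet {X : Type*} [MetricSpace X] [MeasurableSpace X]
    (μ : MeasureTheory.Measure X) (Λ : X → ℝ → ℝ) (f : X → ℝ) : Set ℝ :=
  {c : ℝ | ∃ (b : ℕ → X → ℝ) (l : ℕ → ℝ),
    (∀ i, IsAtomicBlock μ Λ (b i) (l i)) ∧ Summable l ∧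
    Filter.Tendsto
      (fun N => MeasureTheory.eLpNorm (f - ∑ i ∈ Finset.range N, b i) 1 μ)
      Filter.atTop (nhds 0) ∧
    c = ∑' i, l i}

/-- `f ∈ H¹(μ)`. -/
def MemH1 {X : Type*} [MetricSpace X] [MeasurableSpace X]
    (μ : MeasureTheory.Measure X) (Λ : X → ℝ → ℝ) (f : X → ℝ) : Prop :=
  MeasureTheory.Integrable f μ ∧ (H1NormSet μ Λ f).Nonempty

/-- The `H¹(μ)` norm of `f`. -/
def H1Norm {X : Type*} [MetricSpace X] [MeasurableSpace X]
    (μ : MeasureTheory.Measure X) (Λ : X → ℝ → ℝ) (f : X → ℝ) : ℝ :=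
  sInf (H1NormSet μ Λ f)

/-- The fractional maximal operator `M^{(α)}_{p,ρ}`. -/
def fracMax {X : Type*} [MetricSpace X] [MeasurableSpace X]
    (μ : MeasureTheory.Measure X) (p ρ α : ℝ) (f : X → ℝ) (x : X) : ℝ≥0∞ :=
  ⨆ (c : X) (r : ℝ) (_ : 0 < r) (_ : x ∈ Metric.ball c r),
    ENNReal.ofReal (((μ (Metric.ball c (ρ * r))).toReal ^ (α * p - 1) *
      ∫ y in Metric.ball c r, |f y| ^ p ∂μ) ^ (1 / p))

/-- The constant `β₆`. -/
def beta6 (N₀ : ℕ) (Cl : ℝ) : ℝ :=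
  6 ^ (3 * max (Real.logb 2 N₀) (Real.logb 2 Cl)) +
    30 ^ (Real.logb 2 N₀) + 30 ^ (Real.logb 2 Cl)

/-- The ball `B(x,r)` is `(6,β)`-doubling. -/
def IsDoublingBall {X : Type*} [MetricSpace X] [MeasurableSpace X]
    (μ : MeasureTheory.Measure X) (β : ℝ) (x : X) (r : ℝ) : Prop :=
  μ (Metric.ball x (6 * r)) ≤ ENNReal.ofReal β * μ (Metric.ball x r)

/-- Index of the smallest doubling ball of the form `6^j B`. -/
def doublingIndex {X : Type*} [MetricSpace X] [MeasurableSpace X]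
    (μ : MeasureTheory.Measure X) (β : ℝ) (x : X) (r : ℝ) : ℕ :=
  sInf {j : ℕ | IsDoublingBall μ β x (6 ^ j * r)}

/-- Mean value of `f` over the ball `B(x,r)`. -/
def ballAvg {X : Type*} [MetricSpace X] [MeasurableSpace X]
    (μ : MeasureTheory.Measure X) (x : X) (r : ℝ) (f : X → ℝ) : ℝ :=
  (μ (Metric.ball x r)).toReal⁻¹ * ∫ y in Metric.ball x r, f y ∂μ

/-- Mean value of `f` over `B̃`, the smallest doubling ball of the form `6^j B`. -/
def tildeAvg {X : Type*} [MetricSpace X] [MeasurableSpace X]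
    (μ : MeasureTheory.Measure X) (β : ℝ) (x : X) (r : ℝ) (f : X → ℝ) : ℝ :=
  ballAvg μ x (6 ^ doublingIndex μ β x r * r) f

/-- `N_{B,S}`: smallest integer `N ≥ 1` with `6^N r_B ≥ r_S`. -/
def NBS (rB rS : ℝ) : ℕ :=
  sInf {N : ℕ | 1 ≤ N ∧ rS ≤ 6 ^ N * rB}

/-- The fractional coefficient `K̃^{(α)}_{B,S}` where `B = B(x,rB)` and `r_S = rS`. -/
def Ktilde {X : Type*} [MetricSpace X] [MeasurableSpace X]
    (μ : MeasureTheory.Measure X) (Λ : X → ℝ → ℝ) (α : ℝ) (x : X) (rB rS : ℝ) : ℝ :=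
  1 + ∑ k ∈ Finset.Icc 1 (NBS rB rS),
    ((μ (Metric.ball x (6 ^ k * rB))).toReal / Λ x (6 ^ k * rB)) ^ (1 - α)

/-- The sharp maximal operator `M̃^{#,α}`. -/
def sharpMax {X : Type*} [MetricSpace X] [MeasurableSpace X]
    (μ : MeasureTheory.Measure X) (Λ : X → ℝ → ℝ) (β α : ℝ) (f : X → ℝ) (x : X) : ℝ≥0∞ :=
  (⨆ (c : X) (r : ℝ) (_ : 0 < r) (_ : x ∈ Metric.ball c r),
    ENNReal.ofReal ((μ (Metric.ball c (6 * r))).toReal⁻¹ *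
      ∫ y in Metric.ball c r, |f y - tildeAvg μ β c r f| ∂μ)) +
  ⨆ (cQ : X) (rQ : ℝ) (cR : X) (rR : ℝ) (_ : 0 < rQ) (_ : 0 < rR)
    (_ : x ∈ Metric.ball cQ rQ) (_ : Metric.ball cQ rQ ⊆ Metric.ball cR rR)
    (_ : IsDoublingBall μ β cQ rQ) (_ : IsDoublingBall μ β cR rR),
    ENNReal.ofReal (|ballAvg μ cQ rQ f - ballAvg μ cR rR f| / Ktilde μ Λ α cQ rQ rR)

/-- The commutator `[b, T]`. -/
def commOp {X : Type*} (b : X → ℝ) (T : (X → ℝ) → X → ℝ) : (X → ℝ) → X → ℝ :=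
  fun f x => b x * T f x - T (fun y => b y * f y) x

/-- The multilinear commutator `[b_k, ⋯, [b₁, T] ⋯ ]`. -/
def multiComm {X : Type*} : (k : ℕ) → (Fin k → X → ℝ) → ((X → ℝ) → X → ℝ) →
    (X → ℝ) → X → ℝ
  | 0, _, T => T
  | (k + 1), b, T => commOp (b (Fin.last k)) (multiComm k (fun i => b i.castSucc) T)

/-- `Φ` is a convex Orlicz function. -/
structure IsOrliczFn (Φ : ℝ → ℝ) : Prop where
  convex : ConvexOn ℝ (Set.Ici 0) Φ
  mono : MonotoneOn Φ (Set.Ici (0 : ℝ))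
  map_zero : Φ 0 = 0
  pos : ∀ t : ℝ, 0 < t → 0 < Φ t
  tendsto_atTop : Filter.Tendsto Φ Filter.atTop Filter.atTop

/-- The generalized inverse `Φ⁻¹(t) = inf {s > 0 : Φ(s) > t}`. -/
def orliczInv (Φ : ℝ → ℝ) (t : ℝ) : ℝ :=
  sInf {s : ℝ | 0 < s ∧ t < Φ s}

/-- The Luxemburg norm on the Orlicz space `L^Φ(μ)`. -/
def luxNorm {X : Type*} [MeasurableSpace X] (μ : MeasureTheory.Measure X)
    (Φ : ℝ → ℝ) (f : X → ℝ) : ℝ :=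
  sInf {t : ℝ | 0 < t ∧ ∫ x, Φ (|f x| / t) ∂μ ≤ 1}

/-- `f ∈ L^Φ(μ)`. -/
def MemOrlicz {X : Type*} [MeasurableSpace X] (μ : MeasureTheory.Measure X)
    (Φ : ℝ → ℝ) (f : X → ℝ) : Prop :=
  MeasureTheory.AEStronglyMeasurable f μ ∧
    MeasureTheory.Integrable (fun x => Φ |f x|) μ

/-- `f` satisfies the `Osc_{exp L^r}(μ)` conditions with constant `C`
(doubling parameter `β`). -/
def OscBoundWith {X : Type*} [MetricSpace X] [MeasurableSpace X]
    (μ : MeasureTheory.Measure X) (Λ : X → ℝ → ℝ) (β r : ℝ) (f : X → ℝ) (C : ℝ) : Prop :=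
  (∀ (x : X) (s : ℝ), 0 < s → ∀ t : ℝ, C < t →
    (μ (Metric.ball x (2 * s))).toReal⁻¹ *
      ∫ y in Metric.ball x s, Real.exp ((|f y - tildeAvg μ β x s f| / t) ^ r) ∂μ ≤ 2) ∧
  (∀ (cQ : X) (rQ : ℝ) (cR : X) (rR : ℝ), 0 < rQ → 0 < rR →
    Metric.ball cQ rQ ⊆ Metric.ball cR rR →
    IsDoublingBall μ β cQ rQ → IsDoublingBall μ β cR rR →
    |ballAvg μ cQ rQ f - ballAvg μ cR rR f| ≤ C * Kcoef μ Λ cQ rQ cR rR)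

/-- `f ∈ Osc_{exp L^r}(μ)`. -/
def MemOsc {X : Type*} [MetricSpace X] [MeasurableSpace X]
    (μ : MeasureTheory.Measure X) (Λ : X → ℝ → ℝ) (β r : ℝ) (f : X → ℝ) : Prop :=
  ∃ C : ℝ, 0 ≤ C ∧ OscBoundWith μ Λ β r f C

/-- The `Osc_{exp L^r}(μ)` norm of `f`. -/
def OscNorm {X : Type*} [MetricSpace X] [MeasurableSpace X]
    (μ : MeasureTheory.Measure X) (Λ : X → ℝ → ℝ) (β r : ℝ) (f : X → ℝ) : ℝ :=
  sInf {C : ℝ | 0 ≤ C ∧ OscBoundWith μ Λ β r f C}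

/-- `Φ_s(u) := u log^s (2 + u)`. -/
def PhiLog (s u : ℝ) : ℝ :=
  u * Real.log (2 + u) ^ s

/-- The dominating function `Λ` satisfies the `ε`-weak reverse doubling condition. -/
def WeakReverseDoubling (X : Type*) [MetricSpace X] (Λ : X → ℝ → ℝ) (ε : ℝ) : Prop :=
  ∃ C : ℝ → ℝ, (∀ a : ℝ, 1 ≤ C a) ∧
    (∀ r : ℝ, 0 < r → ENNReal.ofReal r < 2 * EMetric.diam (Set.univ : Set X) →
      ∀ a : ℝ, 1 < a →
        ENNReal.ofReal a < 2 * EMetric.diam (Set.univ : Set X) / ENNReal.ofReal r →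
        ∀ x : X, C a * Λ x r ≤ Λ x (a * r)) ∧
    (∀ a : ℝ, 1 < a → Summable fun k : ℕ => C (a ^ (k + 1)) ^ (-ε))

end NonHomog


/-- Auxiliary: concavity-type inequality for `rpow` and `tsum` in `ℝ≥0∞`. -/
lemma aux_tsum_rpow {ι : Type*} (a : ι → ℝ≥0∞) {s : ℝ} (hs0 : 0 < s) (hs1 : s ≤ 1) :
    (∑' i, a i) ^ s ≤ ∑' i, a i ^ s := by
  have hfin : ∀ F : Finset ι, (∑ i ∈ F, a i) ^ s ≤ ∑ i ∈ F, a i ^ s := by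
    intro F
    induction F using Finset.cons_induction with
    | empty => simp [ENNReal.zero_rpow_of_pos hs0]
    | cons j F hj ih =>
      rw [Finset.sum_cons, Finset.sum_cons]
      exact le_trans (ENNReal.rpow_add_le_add_rpow _ _ hs0.le hs1) (add_le_add le_rfl ih)
  have h2 : ∑' i, a i ≤ (∑' i, a i ^ s) ^ (1 / s) := by
    rw [ENNReal.tsum_eq_iSup_sum]
    refine iSup_le fun F => ?_
    have h3 : (∑ i ∈ F, a i) = ((∑ i ∈ F, a i) ^ s) ^ (1 / s) := by
      rw [← ENNReal.rpow_mul, mul_one_div_cancel hs0.ne', ENNReal.rpow_one]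
    rw [h3]
    exact ENNReal.rpow_le_rpow (le_trans (hfin F) (ENNReal.sum_le_tsum F)) (by positivity)
  calc (∑' i, a i) ^ s ≤ ((∑' i, a i ^ s) ^ (1 / s)) ^ s := ENNReal.rpow_le_rpow h2 hs0.le
    _ = ∑' i, a i ^ s := by
      rw [← ENNReal.rpow_mul, one_div_mul_cancel hs0.ne', ENNReal.rpow_one]

/-- Estimate (3.1): the weak type estimate for the fractional maximal operator
`M^{(α)}_{p,ρ}`. -/
theorem statement6 {X : Type*} [MetricSpace X] [MeasurableSpace X] [BorelSpace X]
    (μ : MeasureTheory.Measure X) (Λ : X → ℝ → ℝ) (Cl : ℝ)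
    (hGD : NonHomog.GeomDoubling X) (hUD : NonHomog.UpperDoubling μ Λ Cl)
    (α : ℝ) (hα : α ∈ Set.Ioo (0 : ℝ) 1)
    (p ρ : ℝ) (hp : 1 < p) (hp' : p < 1 / α) (hρ : 5 ≤ ρ) :
    ∃ C : ℝ, 0 < C ∧ ∀ f : X → ℝ, MeasureTheory.MemLp f (ENNReal.ofReal p) μ →
      ∀ t : ℝ, 0 < t →
        μ {x : X | ENNReal.ofReal t < NonHomog.fracMax μ p ρ α f x} ≤
          ENNReal.ofReal
            (C * ((MeasureTheory.eLpNorm f (ENNReal.ofReal p) μ).toReal / t) ^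
              (p / (1 - α * p))) := by
  classical
  obtain ⟨hα0, hα1⟩ := hα
  have hp0 : (0:ℝ) < p := lt_trans one_pos hp
  have hap : α * p < 1 := by
    have h := (lt_div_iff₀ hα0).mp hp'
    nlinarith
  have hap0 : 0 < α * p := mul_pos hα0 hp0
  set s : ℝ := 1 - α * p with hs_def
  have hs0 : 0 < s := by simp only [hs_def]; linarith
  have hs1 : s ≤ 1 := by simp only [hs_def]; linarith
  refine ⟨1, one_pos, ?_⟩
  intro f hf t ht
  have hq_ne0 : ENNReal.ofReal p ≠ 0 := by
    simp only [ne_eq, ENNReal.ofReal_eq_zero, not_le]; exact hp0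
  have hq_ne_top : ENNReal.ofReal p ≠ ⊤ := ENNReal.ofReal_ne_top
  have hqt : (ENNReal.ofReal p).toReal = p := ENNReal.toReal_ofReal hp0.le
  have hint : MeasureTheory.Integrable (fun y => |f y| ^ p) μ := by
    have h := hf.integrable_norm_rpow hq_ne0 hq_ne_top
    simpa [Real.norm_eq_abs, hqt] using h
  set Itot : ℝ≥0∞ := ∫⁻ y, ENNReal.ofReal (|f y| ^ p) ∂μ with hItot_def
  have hItot_eq : Itot = (MeasureTheory.eLpNorm f (ENNReal.ofReal p) μ) ^ p := by
    rw [MeasureTheory.eLpNorm_eq_lintegral_rpow_enorm_toReal hq_ne0 hq_ne_top, hqt,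
      ← ENNReal.rpow_mul, one_div, inv_mul_cancel₀ hp0.ne', ENNReal.rpow_one, hItot_def]
    congr 1
    funext y
    rw [← Real.norm_eq_abs, ← ENNReal.ofReal_rpow_of_nonneg (norm_nonneg _) hp0.le,
      ofReal_norm_eq_enorm]
  have hItot_ne : Itot ≠ ⊤ := by
    rw [hItot_eq]
    exact (ENNReal.rpow_lt_top_of_nonneg hp0.le hf.2.ne).ne
  set N : ℝ := (MeasureTheory.eLpNorm f (ENNReal.ofReal p) μ).toReal with hN_def
  set B : ℝ≥0∞ := (ENNReal.ofReal (t ^ (-p)) * Itot) ^ (1 / s) with hB_def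
  have hBle : B ≤ ENNReal.ofReal (1 * (N / t) ^ (p / (1 - α * p))) := by
    have heq : ENNReal.ofReal (t ^ (-p)) * Itot = ENNReal.ofReal ((N / t) ^ p) := by
      rw [hItot_eq, ← ENNReal.ofReal_toReal hf.2.ne, ← hN_def,
        ENNReal.ofReal_rpow_of_nonneg ENNReal.toReal_nonneg hp0.le,
        ← ENNReal.ofReal_mul (by positivity)]
      congr 1
      rw [Real.div_rpow ENNReal.toReal_nonneg ht.le, Real.rpow_neg ht.le, ← hN_def]
      ring
    rw [hB_def, heq, ENNReal.ofReal_rpow_of_nonneg (by positivity) (by positivity)]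
    apply ENNReal.ofReal_le_ofReal
    rw [← Real.rpow_mul (by positivity), mul_one_div, one_mul, ← hs_def]
  -- the key per-ball estimate
  have key : ∀ (c : X) (r : ℝ), 0 < r →
      ENNReal.ofReal t < ENNReal.ofReal (((μ (Metric.ball c (ρ * r))).toReal ^ (α * p - 1) *
        ∫ y in Metric.ball c r, |f y| ^ p ∂μ) ^ (1 / p)) →
      (0 < ∫⁻ y in Metric.ball c r, ENNReal.ofReal (|f y| ^ p) ∂μ) ∧
      μ (Metric.ball c (ρ * r)) ^ s ≤
        ENNReal.ofReal (t ^ (-p)) * ∫⁻ y in Metric.ball c r, ENNReal.ofReal (|f y| ^ p) ∂μ := by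
    intro c r hr hV
    set m : ℝ := (μ (Metric.ball c (ρ * r))).toReal with hm_def
    set g : ℝ := ∫ y in Metric.ball c r, |f y| ^ p ∂μ with hg_def
    have hg0 : 0 ≤ g := MeasureTheory.integral_nonneg fun y => by positivity
    have hm0 : 0 ≤ m := ENNReal.toReal_nonneg
    have hx0 : 0 ≤ m ^ (α * p - 1) * g := mul_nonneg (Real.rpow_nonneg hm0 _) hg0
    have hv : t < (m ^ (α * p - 1) * g) ^ (1 / p) := by
      by_contra hle
      push_neg at hle
      exact absurd (ENNReal.ofReal_le_ofReal hle) (not_le.mpr hV)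
    have htp : t ^ p < m ^ (α * p - 1) * g := by
      calc t ^ p < ((m ^ (α * p - 1) * g) ^ (1 / p)) ^ p :=
            Real.rpow_lt_rpow ht.le hv hp0
        _ = m ^ (α * p - 1) * g := by
            rw [← Real.rpow_mul hx0, one_div_mul_cancel hp0.ne', Real.rpow_one]
    have htp_pos : (0:ℝ) < t ^ p := Real.rpow_pos_of_pos ht _
    have hmpos : 0 < m := by
      rcases eq_or_lt_of_le hm0 with h | h
      · exfalso
        rw [← h, Real.zero_rpow (by intro h0; simp only [sub_eq_zero] at h0; linarith),
          zero_mul] at htp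
        linarith
      · exact h
    have hgpos : 0 < g := by
      by_contra hgle
      push_neg at hgle
      nlinarith [Real.rpow_nonneg hm0 (α * p - 1)]
    have hgG : ENNReal.ofReal g =
        ∫⁻ y in Metric.ball c r, ENNReal.ofReal (|f y| ^ p) ∂μ := by
      rw [hg_def]
      exact MeasureTheory.ofReal_integral_eq_lintegral_ofReal
        (hint.restrict)
        (Filter.Eventually.of_forall fun y => by positivity)
    constructor
    · rw [← hgG]; exact ENNReal.ofReal_pos.mpr hgpos
    have hkey_real : m ^ s ≤ t ^ (-p) * g := by
      have hms : 0 < m ^ s := Real.rpow_pos_of_pos hmpos _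
      have hprod : m ^ (α * p - 1) * m ^ s = 1 := by
        rw [← Real.rpow_add hmpos]
        norm_num [hs_def]
      have h1 : t ^ p * m ^ s < g := by
        calc t ^ p * m ^ s < (m ^ (α * p - 1) * g) * m ^ s :=
              mul_lt_mul_of_pos_right htp hms
          _ = g * (m ^ (α * p - 1) * m ^ s) := by ring
          _ = g := by rw [hprod, mul_one]
      rw [Real.rpow_neg ht.le, ← div_eq_inv_mul]
      rw [le_div_iff₀ htp_pos]
      nlinarith
    have hρr : 0 < ρ * r := mul_pos (lt_of_lt_of_le (by norm_num) hρ) hr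
    have hfin : μ (Metric.ball c (ρ * r)) ≠ ⊤ :=
      (lt_of_le_of_lt (hUD.measure_ball_le c (ρ * r) hρr) ENNReal.ofReal_lt_top).ne
    have hmeq : μ (Metric.ball c (ρ * r)) ^ s = ENNReal.ofReal (m ^ s) := by
      rw [← ENNReal.ofReal_rpow_of_nonneg hm0 hs0.le, ENNReal.ofReal_toReal hfin]
    calc μ (Metric.ball c (ρ * r)) ^ s = ENNReal.ofReal (m ^ s) := hmeq
      _ ≤ ENNReal.ofReal (t ^ (-p) * g) := ENNReal.ofReal_le_ofReal hkey_real
      _ = ENNReal.ofReal (t ^ (-p)) * ENNReal.ofReal g :=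
          ENNReal.ofReal_mul (Real.rpow_nonneg ht.le _)
      _ = _ := by rw [hgG]
  -- main argument
  set Eset := {x : X | ENNReal.ofReal t < NonHomog.fracMax μ p ρ α f x} with hEset
  suffices hE : μ Eset ≤ B by exact hE.trans hBle
  have hwit : ∀ x ∈ Eset, ∃ (c : X) (r : ℝ), 0 < r ∧ x ∈ Metric.ball c r ∧
      ENNReal.ofReal t < ENNReal.ofReal (((μ (Metric.ball c (ρ * r))).toReal ^ (α * p - 1) *
        ∫ y in Metric.ball c r, |f y| ^ p ∂μ) ^ (1 / p)) := by
    intro x hx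
    simp only [hEset, Set.mem_setOf_eq, NonHomog.fracMax, lt_iSup_iff] at hx
    obtain ⟨c, r, hr, hxr, hV⟩ := hx
    exact ⟨c, r, hr, hxr, hV⟩
  rcases isEmpty_or_nonempty X with hX | hX
  · rw [Set.eq_empty_of_isEmpty Eset, measure_empty]
    exact zero_le
  obtain ⟨x₀⟩ := hX
  have hEn_mono : Monotone (fun n : ℕ => Eset ∩ Metric.ball x₀ (n : ℝ)) := by
    intro a b hab
    exact Set.inter_subset_inter_right _ (Metric.ball_subset_ball (by exact_mod_cast hab))
  have hEU : Eset = ⋃ n : ℕ, (Eset ∩ Metric.ball x₀ (n : ℝ)) := by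
    ext x
    simp only [Set.mem_iUnion, Set.mem_inter_iff]
    constructor
    · intro hx
      obtain ⟨n, hn⟩ := exists_nat_gt (dist x x₀)
      exact ⟨n, hx, by simpa [Metric.mem_ball] using hn⟩
    · rintro ⟨n, hn, -⟩; exact hn
  rw [hEU, hEn_mono.measure_iUnion]
  refine iSup_le fun n => ?_
  by_cases hbig : ∃ (c : X) (r : ℝ), (n : ℝ) < r ∧
      (ENNReal.ofReal t < ENNReal.ofReal (((μ (Metric.ball c (ρ * r))).toReal ^ (α * p - 1) *
        ∫ y in Metric.ball c r, |f y| ^ p ∂μ) ^ (1 / p))) ∧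
      (Metric.ball c r ∩ Metric.ball x₀ (n : ℝ)).Nonempty
  · obtain ⟨c, r, hnr, hV, z, hz1, hz2⟩ := hbig
    have hr : 0 < r := lt_of_le_of_lt (Nat.cast_nonneg n) hnr
    have hsub : Eset ∩ Metric.ball x₀ (n : ℝ) ⊆ Metric.ball c (ρ * r) := by
      intro y hy
      have h1 : dist y x₀ < n := hy.2
      have h2 : dist z x₀ < n := Metric.mem_ball.mp hz2
      have h3 : dist z c < r := Metric.mem_ball.mp hz1
      have h4 := dist_triangle y x₀ c
      have h5 := dist_triangle x₀ z c
      rw [dist_comm x₀ z] at h5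
      have h6 : (5:ℝ) * r ≤ ρ * r := mul_le_mul_of_nonneg_right hρ hr.le
      rw [Metric.mem_ball]
      linarith
    calc μ (Eset ∩ Metric.ball x₀ (n:ℝ)) ≤ μ (Metric.ball c (ρ * r)) := measure_mono hsub
      _ = (μ (Metric.ball c (ρ * r)) ^ s) ^ (1/s) := by
          rw [← ENNReal.rpow_mul, mul_one_div_cancel hs0.ne', ENNReal.rpow_one]
      _ ≤ (ENNReal.ofReal (t ^ (-p)) *
            ∫⁻ y in Metric.ball c r, ENNReal.ofReal (|f y| ^ p) ∂μ) ^ (1/s) :=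
          ENNReal.rpow_le_rpow (key c r hr hV).2 (by positivity)
      _ ≤ B := by
          rw [hB_def]
          exact ENNReal.rpow_le_rpow
            (mul_le_mul_right (MeasureTheory.setLIntegral_le_lintegral _ _) _) (by positivity)
  · push_neg at hbig
    set F : Set (X × ℝ) := {q | 0 < q.2 ∧ q.2 ≤ (n:ℝ) ∧
      ENNReal.ofReal t < ENNReal.ofReal (((μ (Metric.ball q.1 (ρ * q.2))).toReal ^ (α * p - 1) *
        ∫ y in Metric.ball q.1 q.2, |f y| ^ p ∂μ) ^ (1 / p))} with hF
    obtain ⟨u, huF, hdisj, hcov⟩ :=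
      Vitali.exists_disjoint_subfamily_covering_enlargement_closedBall F Prod.fst Prod.snd
        (n : ℝ) (fun q hq => hq.2.1) 4 (by norm_num)
    have hcover : Eset ∩ Metric.ball x₀ (n:ℝ) ⊆ ⋃ q ∈ u, Metric.ball q.1 (ρ * q.2) := by
      intro x hx
      obtain ⟨c, r, hr, hxr, hV⟩ := hwit x hx.1
      have hrn : r ≤ (n:ℝ) := by
        by_contra hgt
        push_neg at hgt
        exact Set.eq_empty_iff_forall_notMem.mp (hbig c r hgt hV) x ⟨hxr, hx.2⟩
      have haF : (⟨c, r⟩ : X × ℝ) ∈ F := ⟨hr, hrn, hV⟩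
      obtain ⟨b, hbu, hsub⟩ := hcov _ haF
      have hb2 : 0 < b.2 := (huF hbu).1
      refine Set.mem_biUnion hbu ?_
      have h1 : x ∈ Metric.closedBall c r := Metric.ball_subset_closedBall hxr
      have h2 := Metric.mem_closedBall.mp (hsub h1)
      have h6 : (5:ℝ) * b.2 ≤ ρ * b.2 := mul_le_mul_of_nonneg_right hρ hb2.le
      rw [Metric.mem_ball]
      linarith
    set G : X × ℝ → ℝ≥0∞ :=
      fun q => ∫⁻ y in Metric.ball q.1 q.2, ENNReal.ofReal (|f y| ^ p) ∂μ with hG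
    have hudisj : u.PairwiseDisjoint (fun q : X × ℝ => Metric.ball q.1 q.2) :=
      hdisj.mono (fun q => Metric.ball_subset_closedBall)
    have hsum_le : ∀ sF : Finset (X × ℝ), ↑sF ⊆ u → ∑ q ∈ sF, G q ≤ Itot := by
      intro sF hsF
      have hdisj' : Set.PairwiseDisjoint (↑sF) (fun q : X × ℝ => Metric.ball q.1 q.2) :=
        hudisj.subset hsF
      rw [hG, ← MeasureTheory.lintegral_biUnion_finset hdisj' (fun q _ => measurableSet_ball) _]
      exact MeasureTheory.setLIntegral_le_lintegral _ _
    have htsum : ∑' q : u, G q ≤ Itot := by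
      rw [ENNReal.tsum_eq_iSup_sum]
      refine iSup_le fun sF => ?_
      rw [← Finset.sum_image (g := (Subtype.val : u → X × ℝ))
        (fun x _ y _ h => Subtype.val_injective h)]
      refine hsum_le _ ?_
      intro q hq
      simp only [Finset.coe_image] at hq
      obtain ⟨⟨q', hq'⟩, -, rfl⟩ := hq
      exact hq'
    have hGpos : ∀ q ∈ u, 0 < G q := fun q hq =>
      (key q.1 q.2 (huF hq).1 (huF hq).2.2).1
    have hcount : u.Countable := by
      have hfin : ∀ k : ℕ, {i : u | ((k:ℝ≥0∞))⁻¹ ≤ G i}.Finite := fun k =>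
        ENNReal.finite_const_le_of_tsum_ne_top (ne_top_of_le_ne_top hItot_ne htsum)
          (by simp)
      have hsubU : u ⊆ ⋃ k : ℕ, Subtype.val '' {i : u | ((k:ℝ≥0∞))⁻¹ ≤ G i} := by
        intro q hq
        obtain ⟨k, hk⟩ := ENNReal.exists_inv_nat_lt (hGpos q hq).ne'
        exact Set.mem_iUnion.mpr ⟨k, ⟨⟨q, hq⟩, hk.le, rfl⟩⟩
      exact (Set.countable_iUnion (fun k => ((hfin k).image _).countable)).mono hsubU
    haveI := hcount.to_subtype
    have hmeas_le : μ (Eset ∩ Metric.ball x₀ (n:ℝ)) ≤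
        ∑' q : u, μ (Metric.ball (q : X × ℝ).1 (ρ * (q : X × ℝ).2)) := by
      refine le_trans (measure_mono hcover) ?_
      rw [Set.biUnion_eq_iUnion]
      exact measure_iUnion_le _
    have hpow : μ (Eset ∩ Metric.ball x₀ (n:ℝ)) ^ s ≤ ENNReal.ofReal (t ^ (-p)) * Itot := by
      calc μ (Eset ∩ Metric.ball x₀ (n:ℝ)) ^ s
          ≤ (∑' q : u, μ (Metric.ball (q : X × ℝ).1 (ρ * (q : X × ℝ).2))) ^ s :=
            ENNReal.rpow_le_rpow hmeas_le hs0.le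
        _ ≤ ∑' q : u, μ (Metric.ball (q : X × ℝ).1 (ρ * (q : X × ℝ).2)) ^ s :=
            aux_tsum_rpow _ hs0 hs1
        _ ≤ ∑' q : u, ENNReal.ofReal (t ^ (-p)) * G q :=
            ENNReal.tsum_le_tsum (fun q =>
              (key (q : X × ℝ).1 (q : X × ℝ).2 (huF q.2).1 (huF q.2).2.2).2)
        _ = ENNReal.ofReal (t ^ (-p)) * ∑' q : u, G q := ENNReal.tsum_mul_left
        _ ≤ ENNReal.ofReal (t ^ (-p)) * Itot := mul_le_mul_right htsum _
    calc μ (Eset ∩ Metric.ball x₀ (n:ℝ))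
        = (μ (Eset ∩ Metric.ball x₀ (n:ℝ)) ^ s) ^ (1/s) := by
          rw [← ENNReal.rpow_mul, mul_one_div_cancel hs0.ne', ENNReal.rpow_one]
      _ ≤ (ENNReal.ofReal (t ^ (-p)) * Itot) ^ (1/s) :=
          ENNReal.rpow_le_rpow hpow (by positivity)
      _ = B := by rw [hB_def]
end
end

section
/- Let (X,d,μ) be a non-homogeneous metric measure space and α ∈ [0,1). There exists a constant P_α > 0, depending only on C_λ and α, with the following property: if m ∈ ℕ and B₁ ⊂ B₂ ⊂ ⋯ ⊂ B_m are concentric balls with K̃^{(α)}_{B_i,B_{i+1}} > P_α for every i ∈ {1,…,m−1}, then there is a constant C > 0, depending only on C_λ and α, such that Σ_{i=1}^{m−1} K̃^{(α)}_{B_i,B_{i+1}} ≤ C K̃^{(α)}_{B₁,B_m}. -/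
open MeasureTheory Metric Set Filter ENNReal NNReal

noncomputable section

section Statement8Aux

/-- `NBS` is a member of its defining set. -/
lemma nbs_spec {rB rS : ℝ} (hB : 0 < rB) :
    1 ≤ NonHomog.NBS rB rS ∧ rS ≤ 6 ^ NonHomog.NBS rB rS * rB := by
  have hne : ∃ N : ℕ, 1 ≤ N ∧ rS ≤ 6 ^ N * rB := by
    obtain ⟨n, hn⟩ := pow_unbounded_of_one_lt (rS / rB) (by norm_num : (1:ℝ) < 6)
    refine ⟨n + 1, by omega, ?_⟩
    have h1 : rS < 6 ^ n * rB := (div_lt_iff₀ hB).mp hn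
    have h2 : (6:ℝ) ^ n * rB ≤ 6 ^ (n+1) * rB :=
      mul_le_mul_of_nonneg_right (pow_le_pow_right₀ (by norm_num) (by omega)) hB.le
    linarith
  exact Nat.sInf_mem hne

lemma nbs_min {rB rS : ℝ} (h2 : 2 ≤ NonHomog.NBS rB rS) :
    6 ^ (NonHomog.NBS rB rS - 1) * rB < rS := by
  have hlt : NonHomog.NBS rB rS - 1 < sInf {N : ℕ | 1 ≤ N ∧ rS ≤ 6 ^ N * rB} := by
    have : NonHomog.NBS rB rS = sInf {N : ℕ | 1 ≤ N ∧ rS ≤ 6 ^ N * rB} := rfl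
    omega
  have hnm := Nat.notMem_of_lt_sInf hlt
  by_contra hcon
  push_neg at hcon
  exact hnm ⟨by omega, hcon⟩

end Statement8Aux

/-- Lemma 3.7: if each `K̃^{(α)}_{B_i,B_{i+1}}` exceeds a suitable threshold `P_α` for a
chain of concentric balls, then the sum is controlled by `K̃^{(α)}_{B₁,B_m}`. -/
theorem statement8 {X : Type*} [MetricSpace X] [MeasurableSpace X] [BorelSpace X]
    (μ : MeasureTheory.Measure X) (Λ : X → ℝ → ℝ) (Cl : ℝ)
    (hGD : NonHomog.GeomDoubling X) (hUD : NonHomog.UpperDoubling μ Λ Cl)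
    (α : ℝ) (hα : α ∈ Set.Ico (0 : ℝ) 1) :
    ∃ P : ℝ, 0 < P ∧ ∃ C : ℝ, 0 < C ∧
      ∀ (m : ℕ) (x : X) (r : ℕ → ℝ), 1 ≤ m →
        (∀ i, i < m → 0 < r i) →
        (∀ i, i + 1 < m → r i ≤ r (i + 1)) →
        (∀ i, i + 1 < m → P < NonHomog.Ktilde μ Λ α x (r i) (r (i + 1))) →
        ∑ i ∈ Finset.range (m - 1), NonHomog.Ktilde μ Λ α x (r i) (r (i + 1)) ≤
          C * NonHomog.Ktilde μ Λ α x (r 0) (r (m - 1)) := by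
  obtain ⟨hα0, hα1⟩ := hα
  have hCl : 1 ≤ Cl := hUD.one_le
  have hCl3 : (1:ℝ) ≤ Cl ^ 3 := one_le_pow₀ hCl
  refine ⟨3, by norm_num, 3 * Cl ^ 3, by nlinarith, ?_⟩
  intro m x r hm hrpos hrmono hK
  -- notation
  set t : ℝ → ℝ := fun ρ => ((μ (Metric.ball x ρ)).toReal / Λ x ρ) ^ (1 - α) with htdef
  have hΛpos : ∀ ρ : ℝ, 0 < ρ → 0 < Λ x ρ := fun ρ h => hUD.pos x ρ h
  have hμΛ : ∀ ρ : ℝ, 0 < ρ → (μ (Metric.ball x ρ)).toReal ≤ Λ x ρ := fun ρ h =>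
    ENNReal.toReal_le_of_le_ofReal (hΛpos ρ h).le (hUD.measure_ball_le x ρ h)
  have ht_nonneg : ∀ ρ : ℝ, 0 < ρ → 0 ≤ t ρ := fun ρ h =>
    Real.rpow_nonneg (div_nonneg ENNReal.toReal_nonneg (hΛpos ρ h).le) _
  have ht_le_one : ∀ ρ : ℝ, 0 < ρ → t ρ ≤ 1 := fun ρ h =>
    Real.rpow_le_one (div_nonneg ENNReal.toReal_nonneg (hΛpos ρ h).le)
      (div_le_one_of_le₀ (hμΛ ρ h) (hΛpos ρ h).le) (by linarith)
  -- doubling of Λ over a factor 6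
  have hΛ6 : ∀ ρ : ℝ, 0 < ρ → Λ x (6 * ρ) ≤ Cl ^ 3 * Λ x ρ := by
    intro ρ hρ
    have h8 : Λ x (8 * ρ) ≤ Cl * Λ x (4 * ρ) := by
      have h := hUD.le_mul_half x (8 * ρ) (by linarith)
      rwa [show (8:ℝ) * ρ / 2 = 4 * ρ by ring] at h
    have h4 : Λ x (4 * ρ) ≤ Cl * Λ x (2 * ρ) := by
      have h := hUD.le_mul_half x (4 * ρ) (by linarith)
      rwa [show (4:ℝ) * ρ / 2 = 2 * ρ by ring] at h
    have h2 : Λ x (2 * ρ) ≤ Cl * Λ x ρ := by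
      have h := hUD.le_mul_half x (2 * ρ) (by linarith)
      rwa [show (2:ℝ) * ρ / 2 = ρ by ring] at h
    have h6 : Λ x (6 * ρ) ≤ Λ x (8 * ρ) :=
      hUD.mono x (Set.mem_Ioi.mpr (by linarith)) (Set.mem_Ioi.mpr (by linarith)) (by linarith)
    calc Λ x (6 * ρ) ≤ Λ x (8 * ρ) := h6
      _ ≤ Cl * Λ x (4 * ρ) := h8
      _ ≤ Cl * (Cl * Λ x (2 * ρ)) := mul_le_mul_of_nonneg_left h4 (by linarith)
      _ ≤ Cl * (Cl * (Cl * Λ x ρ)) :=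
          mul_le_mul_of_nonneg_left (mul_le_mul_of_nonneg_left h2 (by linarith)) (by linarith)
      _ = Cl ^ 3 * Λ x ρ := by ring
  -- comparison of t at comparable radii
  have hcomp : ∀ ρ1 ρ2 : ℝ, 0 < ρ1 → ρ1 ≤ ρ2 → ρ2 ≤ 6 * ρ1 → t ρ1 ≤ Cl ^ 3 * t ρ2 := by
    intro ρ1 ρ2 h1 h12 h26
    have h2 : 0 < ρ2 := lt_of_lt_of_le h1 h12
    have hμmono : (μ (Metric.ball x ρ1)).toReal ≤ (μ (Metric.ball x ρ2)).toReal := by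
      apply ENNReal.toReal_mono
      · exact (lt_of_le_of_lt (hUD.measure_ball_le x ρ2 h2) ENNReal.ofReal_lt_top).ne
      · exact measure_mono (Metric.ball_subset_ball h12)
    have hΛle : Λ x ρ2 ≤ Cl ^ 3 * Λ x ρ1 := by
      have hA := hΛ6 ρ1 h1
      have hB : Λ x ρ2 ≤ Λ x (6 * ρ1) :=
        hUD.mono x (Set.mem_Ioi.mpr h2) (Set.mem_Ioi.mpr (by linarith)) h26
      linarith
    have hbase : (μ (Metric.ball x ρ1)).toReal / Λ x ρ1 ≤
        Cl ^ 3 * ((μ (Metric.ball x ρ2)).toReal / Λ x ρ2) := by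
      rw [mul_div_assoc', div_le_div_iff₀ (hΛpos ρ1 h1) (hΛpos ρ2 h2)]
      calc (μ (Metric.ball x ρ1)).toReal * Λ x ρ2
          ≤ (μ (Metric.ball x ρ2)).toReal * (Cl ^ 3 * Λ x ρ1) :=
            mul_le_mul hμmono hΛle (hΛpos ρ2 h2).le ENNReal.toReal_nonneg
        _ = Cl ^ 3 * (μ (Metric.ball x ρ2)).toReal * Λ x ρ1 := by ring
    have hb2 : (0:ℝ) ≤ (μ (Metric.ball x ρ2)).toReal / Λ x ρ2 :=
      div_nonneg ENNReal.toReal_nonneg (hΛpos ρ2 h2).le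
    calc t ρ1 ≤ (Cl ^ 3 * ((μ (Metric.ball x ρ2)).toReal / Λ x ρ2)) ^ (1 - α) :=
          Real.rpow_le_rpow (div_nonneg ENNReal.toReal_nonneg (hΛpos ρ1 h1).le) hbase
            (by linarith)
      _ = (Cl ^ 3) ^ (1 - α) * ((μ (Metric.ball x ρ2)).toReal / Λ x ρ2) ^ (1 - α) :=
          Real.mul_rpow (by positivity) hb2
      _ ≤ Cl ^ 3 * t ρ2 := by
          apply mul_le_mul_of_nonneg_right ?_ (Real.rpow_nonneg hb2 _)
          calc (Cl ^ 3 : ℝ) ^ (1 - α) ≤ (Cl ^ 3 : ℝ) ^ (1:ℝ) :=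
                Real.rpow_le_rpow_of_exponent_le hCl3 (by linarith)
            _ = Cl ^ 3 := Real.rpow_one _
  -- monotonicity of r
  have hmono : ∀ i j, i ≤ j → j < m → r i ≤ r j := by
    intro i j
    induction j with
    | zero => intro hij _; have : i = 0 := by omega
              simp [this]
    | succ n ih =>
      intro hij hj
      rcases Nat.lt_or_ge i (n + 1) with h | h
      · exact (ih (by omega) (by omega)).trans (hrmono n hj)
      · have : i = n + 1 := by omega
        simp [this]
  have hr0 : 0 < r 0 := hrpos 0 (by omega)
  have hrm : 0 < r (m - 1) := hrpos (m - 1) (by omega)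
  set Nt := NonHomog.NBS (r 0) (r (m - 1)) with hNtdef
  obtain ⟨hNt1, hNt2⟩ := nbs_spec (rS := r (m - 1)) hr0
  set N : ℕ → ℕ := fun i => NonHomog.NBS (r i) (r (i + 1)) with hNdef
  -- upper bound on the radii within a block
  have hub : ∀ i, i < m - 1 → ∀ k, k ≤ N i → (6:ℝ) ^ k * r i ≤ 6 * r (i + 1) := by
    intro i hi k hk
    have hri : 0 < r i := hrpos i (by omega)
    have hri1 : r i ≤ r (i + 1) := hrmono i (by omega)
    have step : (6:ℝ) ^ (N i) * r i ≤ 6 * r (i + 1) := by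
      rcases Nat.lt_or_ge (N i) 2 with h2 | h2
      · have h1 : N i = 1 := by
          have hge1 : 1 ≤ N i := (nbs_spec (rS := r (i + 1)) hri).1
          omega
        rw [h1, pow_one]; nlinarith
      · have hmin : (6:ℝ) ^ (N i - 1) * r i < r (i + 1) :=
          nbs_min (rB := r i) (rS := r (i + 1)) h2
        have he : (6:ℝ) ^ (N i) = 6 * 6 ^ (N i - 1) := by
          rw [← pow_succ']; congr 1; omega
        rw [he]; nlinarith
    calc (6:ℝ) ^ k * r i ≤ 6 ^ (N i) * r i :=
          mul_le_mul_of_nonneg_right (pow_le_pow_right₀ (by norm_num) hk) hri.le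
      _ ≤ 6 * r (i + 1) := step
  -- interior indices
  set I : ℕ → Finset ℕ :=
    fun i => (Finset.Icc 1 (N i)).filter (fun k => (6:ℝ) ^ k * r i ≤ r (i + 1)) with hIdef
  -- Step A : each Ktilde is controlled by the sum over interior indices
  have hA : ∀ i, i < m - 1 →
      NonHomog.Ktilde μ Λ α x (r i) (r (i + 1)) ≤ 3 * ∑ k ∈ I i, t ((6:ℝ) ^ k * r i) := by
    intro i hi
    have hri : 0 < r i := hrpos i (by omega)
    have hKt : NonHomog.Ktilde μ Λ α x (r i) (r (i + 1)) =
        1 + ∑ k ∈ Finset.Icc 1 (N i), t ((6:ℝ) ^ k * r i) := rfl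
    have hsplit : ∑ k ∈ I i, t ((6:ℝ) ^ k * r i) +
        ∑ k ∈ (Finset.Icc 1 (N i)).filter (fun k => ¬ ((6:ℝ) ^ k * r i ≤ r (i + 1))),
          t ((6:ℝ) ^ k * r i) =
        ∑ k ∈ Finset.Icc 1 (N i), t ((6:ℝ) ^ k * r i) :=
      Finset.sum_filter_add_sum_filter_not _ _ _
    set bad := (Finset.Icc 1 (N i)).filter (fun k => ¬ ((6:ℝ) ^ k * r i ≤ r (i + 1)))
      with hbaddef
    have hbadlt : ∀ a b : ℕ, a ∈ bad → b ∈ bad → a < b → False := by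
      intro a b ha hb hab
      simp only [hbaddef, Finset.mem_filter, Finset.mem_Icc, not_le] at ha hb
      have h1 : (6:ℝ) ^ b * r i ≤ 6 * r (i + 1) := hub i hi b hb.1.2
      have h2 : (6:ℝ) ^ (a + 1) * r i ≤ 6 ^ b * r i :=
        mul_le_mul_of_nonneg_right (pow_le_pow_right₀ (by norm_num) (by omega)) hri.le
      have h3 : 6 * r (i + 1) < (6:ℝ) ^ (a + 1) * r i := by
        rw [pow_succ']; nlinarith [ha.2]
      linarith
    have hbd_card : bad.card ≤ 1 := by
      rw [Finset.card_le_one]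
      intro a ha b hb
      rcases lt_trichotomy a b with h | h | h
      · exact absurd (hbadlt a b ha hb h) (fun h => h)
      · exact h
      · exact absurd (hbadlt b a hb ha h) (fun h => h)
    have hbd_sum : ∑ k ∈ bad, t ((6:ℝ) ^ k * r i) ≤ 1 := by
      calc ∑ k ∈ bad, t ((6:ℝ) ^ k * r i) ≤ ∑ _k ∈ bad, (1:ℝ) :=
            Finset.sum_le_sum (fun k _ => ht_le_one _ (by positivity))
        _ = bad.card := by simp
        _ ≤ 1 := by exact_mod_cast hbd_card
    have hKi : 3 < NonHomog.Ktilde μ Λ α x (r i) (r (i + 1)) := hK i (by omega)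
    rw [hKt] at hKi ⊢
    linarith [hsplit, hbd_sum, hKi]
  -- the band function
  set J : ℝ → ℕ := fun ρ => ⌊Real.logb 6 (ρ / r 0)⌋₊ with hJdef
  have hJ1 : ∀ ρ : ℝ, r 0 ≤ ρ → (6:ℝ) ^ (J ρ) * r 0 ≤ ρ := by
    intro ρ hρ
    have hρ0 : 0 < ρ := lt_of_lt_of_le hr0 hρ
    have hq : 1 ≤ ρ / r 0 := (one_le_div hr0).mpr hρ
    have hlog : (J ρ : ℝ) ≤ Real.logb 6 (ρ / r 0) :=
      Nat.floor_le (Real.logb_nonneg (by norm_num) hq)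
    have hpow : (6:ℝ) ^ (J ρ : ℝ) ≤ ρ / r 0 := by
      calc (6:ℝ) ^ (J ρ : ℝ) ≤ (6:ℝ) ^ Real.logb 6 (ρ / r 0) :=
            Real.rpow_le_rpow_of_exponent_le (by norm_num) hlog
        _ = ρ / r 0 := Real.rpow_logb (by norm_num) (by norm_num) (by positivity)
    rw [Real.rpow_natCast] at hpow
    calc (6:ℝ) ^ (J ρ) * r 0 ≤ (ρ / r 0) * r 0 :=
          mul_le_mul_of_nonneg_right hpow hr0.le
      _ = ρ := by field_simp
  have hJ2 : ∀ ρ : ℝ, r 0 ≤ ρ → ρ < (6:ℝ) ^ (J ρ + 1) * r 0 := by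
    intro ρ hρ
    have hρ0 : 0 < ρ := lt_of_lt_of_le hr0 hρ
    have hlog : Real.logb 6 (ρ / r 0) < (J ρ : ℝ) + 1 := Nat.lt_floor_add_one _
    have hpow : ρ / r 0 < (6:ℝ) ^ ((J ρ : ℝ) + 1) := by
      calc ρ / r 0 = (6:ℝ) ^ Real.logb 6 (ρ / r 0) :=
            (Real.rpow_logb (by norm_num) (by norm_num) (by positivity)).symm
        _ < (6:ℝ) ^ ((J ρ : ℝ) + 1) :=
            Real.rpow_lt_rpow_of_exponent_lt (by norm_num) hlog
    have hcast : (6:ℝ) ^ ((J ρ : ℝ) + 1) = (6:ℝ) ^ (J ρ + 1) := by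
      rw [← Real.rpow_natCast 6 (J ρ + 1)]; push_cast; ring_nf
    rw [hcast] at hpow
    calc ρ = (ρ / r 0) * r 0 := by field_simp
      _ < (6:ℝ) ^ (J ρ + 1) * r 0 := by
          exact mul_lt_mul_of_pos_right hpow hr0
  have hJle : ∀ ρ : ℝ, r 0 ≤ ρ → ρ ≤ (6:ℝ) ^ Nt * r 0 → J ρ ≤ Nt := by
    intro ρ hρ hρle
    have h1 := hJ1 ρ hρ
    have hp : (6:ℝ) ^ (J ρ) ≤ 6 ^ Nt := by
      have := h1.trans hρle
      exact le_of_mul_le_mul_right this hr0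
    exact (pow_le_pow_iff_right₀ (by norm_num : (1:ℝ) < 6)).mp hp
  -- the sigma finset of all interior pairs
  set T : Finset ((_ : ℕ) × ℕ) := (Finset.range (m - 1)).sigma (fun i => I i) with hTdef
  set rad : (Σ _ : ℕ, ℕ) → ℝ := fun p => (6:ℝ) ^ p.2 * r p.1 with hraddef
  have hmemT : ∀ p : (Σ _ : ℕ, ℕ), p ∈ T →
      p.1 < m - 1 ∧ 1 ≤ p.2 ∧ p.2 ≤ N p.1 ∧ (6:ℝ) ^ p.2 * r p.1 ≤ r (p.1 + 1) := by
    intro p hp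
    rw [hTdef, Finset.mem_sigma] at hp
    obtain ⟨hp1, hp2⟩ := hp
    rw [hIdef, Finset.mem_filter, Finset.mem_Icc] at hp2
    exact ⟨Finset.mem_range.mp hp1, hp2.1.1, hp2.1.2, hp2.2⟩
  have hrpos' : ∀ p : (Σ _ : ℕ, ℕ), p ∈ T → 0 < rad p := by
    intro p hp
    have h := hmemT p hp
    have : 0 < r p.1 := hrpos p.1 (by omega)
    positivity
  have hge : ∀ p : (Σ _ : ℕ, ℕ), p ∈ T → r 0 ≤ rad p := by
    intro p hp
    have h := hmemT p hp
    have h0 : r 0 ≤ r p.1 := hmono 0 p.1 (by omega) (by omega)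
    have h1 : r p.1 ≤ (6:ℝ) ^ p.2 * r p.1 :=
      le_mul_of_one_le_left (hrpos p.1 (by omega)).le (one_le_pow₀ (by norm_num))
    exact h0.trans h1
  have hle6Nt : ∀ p : (Σ _ : ℕ, ℕ), p ∈ T → rad p ≤ (6:ℝ) ^ Nt * r 0 := by
    intro p hp
    have h := hmemT p hp
    have h1 : rad p ≤ r (p.1 + 1) := h.2.2.2
    have h2 : r (p.1 + 1) ≤ r (m - 1) := hmono (p.1 + 1) (m - 1) (by omega) (by omega)
    exact h1.trans (h2.trans hNt2)
  -- separation of distinct pairs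
  have hsep : ∀ p, p ∈ T → ∀ q, q ∈ T →
      (p.1 < q.1 ∨ (p.1 = q.1 ∧ p.2 < q.2)) → 6 * rad p ≤ rad q := by
    intro p hp q hq hlt
    have hpm := hmemT p hp
    have hqm := hmemT q hq
    rcases hlt with h | ⟨h1, h2⟩
    · have ha : rad p ≤ r (p.1 + 1) := hpm.2.2.2
      have hb : r (p.1 + 1) ≤ r q.1 := hmono (p.1 + 1) q.1 (by omega) (by omega)
      have hc : 6 * r q.1 ≤ (6:ℝ) ^ q.2 * r q.1 := by
        have : (6:ℝ) ^ 1 ≤ 6 ^ q.2 := pow_le_pow_right₀ (by norm_num) hqm.2.1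
        rw [pow_one] at this
        exact mul_le_mul_of_nonneg_right this (hrpos q.1 (by omega)).le
      calc 6 * rad p ≤ 6 * r q.1 := by nlinarith [ha.trans hb]
        _ ≤ rad q := hc
    · have hc : (6:ℝ) ^ (p.2 + 1) ≤ 6 ^ q.2 := pow_le_pow_right₀ (by norm_num) (by omega)
      have hq2 : rad q = (6:ℝ) ^ q.2 * r q.1 := rfl
      have hp2 : 6 * rad p = (6:ℝ) ^ (p.2 + 1) * r p.1 := by
        show 6 * ((6:ℝ) ^ p.2 * r p.1) = _
        rw [pow_succ']; ring
      rw [hp2, hq2, ← h1]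
      exact mul_le_mul_of_nonneg_right hc (hrpos p.1 (by omega)).le
  have hJne : ∀ p, p ∈ T → ∀ q, q ∈ T → 6 * rad p ≤ rad q → J (rad p) ≠ J (rad q) := by
    intro p hp q hq hle heq
    have h1 := hJ1 (rad p) (hge p hp)
    have h2 := hJ2 (rad q) (hge q hq)
    rw [heq] at h1
    have : (6:ℝ) ^ (J (rad q) + 1) * r 0 ≤ 6 * rad p := by
      rw [pow_succ']; nlinarith
    linarith
  have hJinj : ∀ p, p ∈ T → ∀ q, q ∈ T → J (rad p) = J (rad q) → p = q := by
    intro p hp q hq heq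
    rcases lt_trichotomy p.1 q.1 with h | h | h
    · exact absurd heq (hJne p hp q hq (hsep p hp q hq (Or.inl h)))
    · rcases lt_trichotomy p.2 q.2 with h2 | h2 | h2
      · exact absurd heq (hJne p hp q hq (hsep p hp q hq (Or.inr ⟨h, h2⟩)))
      · exact Sigma.ext h (by rw [h2])
      · exact absurd heq.symm (hJne q hq p hp (hsep q hq p hp (Or.inr ⟨h.symm, h2⟩)))
    · exact absurd heq.symm (hJne q hq p hp (hsep q hq p hp (Or.inl h)))
  -- split T according to whether the band is < Nt
  set T1 := T.filter (fun p => J (rad p) < Nt) with hT1def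
  set T2 := T.filter (fun p => ¬ J (rad p) < Nt) with hT2def
  have hsplitT : ∑ p ∈ T1, t (rad p) + ∑ p ∈ T2, t (rad p) = ∑ p ∈ T, t (rad p) :=
    Finset.sum_filter_add_sum_filter_not _ _ _
  have hT2card : T2.card ≤ 1 := by
    rw [Finset.card_le_one]
    intro p hp q hq
    rw [hT2def, Finset.mem_filter] at hp hq
    have hpN : J (rad p) = Nt := by
      have := hJle (rad p) (hge p hp.1) (hle6Nt p hp.1); omega
    have hqN : J (rad q) = Nt := by
      have := hJle (rad q) (hge q hq.1) (hle6Nt q hq.1); omega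
    exact hJinj p hp.1 q hq.1 (by rw [hpN, hqN])
  have hT2sum : ∑ p ∈ T2, t (rad p) ≤ 1 := by
    calc ∑ p ∈ T2, t (rad p) ≤ ∑ _p ∈ T2, (1:ℝ) :=
          Finset.sum_le_sum (fun p hp =>
            ht_le_one _ (hrpos' p (Finset.mem_filter.mp hp).1))
      _ = T2.card := by simp
      _ ≤ 1 := by exact_mod_cast hT2card
  have hT1sum : ∑ p ∈ T1, t (rad p) ≤
      Cl ^ 3 * ∑ p ∈ T1, t ((6:ℝ) ^ (J (rad p) + 1) * r 0) := by
    rw [Finset.mul_sum]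
    apply Finset.sum_le_sum
    intro p hp
    have hpT : p ∈ T := (Finset.mem_filter.mp hp).1
    have h1 := hJ1 (rad p) (hge p hpT)
    have h2 := hJ2 (rad p) (hge p hpT)
    apply hcomp (rad p) ((6:ℝ) ^ (J (rad p) + 1) * r 0) (hrpos' p hpT) h2.le
    rw [pow_succ']; nlinarith
  have himg : ∑ p ∈ T1, t ((6:ℝ) ^ (J (rad p) + 1) * r 0) =
      ∑ j ∈ T1.image (fun p => J (rad p) + 1), t ((6:ℝ) ^ j * r 0) := by
    rw [Finset.sum_image]
    intro p hp q hq heq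
    exact hJinj p (Finset.mem_filter.mp hp).1 q (Finset.mem_filter.mp hq).1 (Nat.add_right_cancel heq)
  have hsubT1 : T1.image (fun p => J (rad p) + 1) ⊆ Finset.Icc 1 Nt := by
    intro j hj
    rw [Finset.mem_image] at hj
    obtain ⟨p, hp, rfl⟩ := hj
    have := (Finset.mem_filter.mp hp).2
    rw [Finset.mem_Icc]; omega
  have himgle : ∑ j ∈ T1.image (fun p => J (rad p) + 1), t ((6:ℝ) ^ j * r 0) ≤
      ∑ j ∈ Finset.Icc 1 Nt, t ((6:ℝ) ^ j * r 0) :=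
    Finset.sum_le_sum_of_subset_of_nonneg hsubT1
      (fun j _ _ => ht_nonneg _ (by positivity))
  -- assemble
  have hKt0 : NonHomog.Ktilde μ Λ α x (r 0) (r (m - 1)) =
      1 + ∑ j ∈ Finset.Icc 1 Nt, t ((6:ℝ) ^ j * r 0) := rfl
  have hS0 : 0 ≤ ∑ j ∈ Finset.Icc 1 Nt, t ((6:ℝ) ^ j * r 0) :=
    Finset.sum_nonneg (fun j _ => ht_nonneg _ (by positivity))
  have hTsum : ∑ p ∈ T, t (rad p) ≤
      Cl ^ 3 * (∑ j ∈ Finset.Icc 1 Nt, t ((6:ℝ) ^ j * r 0)) + 1 := by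
    have := hT1sum
    rw [himg] at this
    have h' : ∑ p ∈ T1, t (rad p) ≤
        Cl ^ 3 * ∑ j ∈ Finset.Icc 1 Nt, t ((6:ℝ) ^ j * r 0) := by
      calc ∑ p ∈ T1, t (rad p) ≤
            Cl ^ 3 * ∑ j ∈ T1.image (fun p => J (rad p) + 1), t ((6:ℝ) ^ j * r 0) := this
        _ ≤ Cl ^ 3 * ∑ j ∈ Finset.Icc 1 Nt, t ((6:ℝ) ^ j * r 0) :=
            mul_le_mul_of_nonneg_left himgle (by positivity)
    linarith [hsplitT, hT2sum]
  calc ∑ i ∈ Finset.range (m - 1), NonHomog.Ktilde μ Λ α x (r i) (r (i + 1))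
      ≤ ∑ i ∈ Finset.range (m - 1), 3 * ∑ k ∈ I i, t ((6:ℝ) ^ k * r i) :=
        Finset.sum_le_sum (fun i hi => hA i (Finset.mem_range.mp hi))
    _ = 3 * ∑ p ∈ T, t (rad p) := by
        rw [hTdef, Finset.sum_sigma, Finset.mul_sum]
    _ ≤ 3 * (Cl ^ 3 * (∑ j ∈ Finset.Icc 1 Nt, t ((6:ℝ) ^ j * r 0)) + 1) := by
        linarith [hTsum]
    _ ≤ 3 * Cl ^ 3 * NonHomog.Ktilde μ Λ α x (r 0) (r (m - 1)) := by
        rw [hKt0]; nlinarith [hS0, hCl3]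
end
end

section
/- Let (X,d,μ) be a non-homogeneous metric measure space and α ∈ [0,1). There exists a constant P̃_α > 0, depending on C_λ, β₆ and α, with the following property: if x ∈ X is a fixed point, C_x > 0, and {f_B}_{B ∋ x} is a collection of real numbers indexed by the balls containing x such that |f_B − f_S| ≤ K̃^{(α)}_{B,S} C_x for all doubling balls B ⊂ S with x ∈ B satisfying K̃^{(α)}_{B,S} ≤ P̃_α, then there exists a constant C₄ > 0, depending only on C_λ, β₆ and α, such that |f_B − f_S| ≤ C₄ K̃^{(α)}_{B,S} C_x for all doubling balls B ⊂ S with x ∈ B. -/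
open MeasureTheory Metric Set Filter ENNReal NNReal

noncomputable section

section AuxLemmas

open NonHomog Metric MeasureTheory Finset

variable {X : Type*} [MetricSpace X] [MeasurableSpace X] {μ : MeasureTheory.Measure X}
  {Λ : X → ℝ → ℝ} {Cl : ℝ}

lemma aux_mu_ne_top (hUD : UpperDoubling μ Λ Cl) (c : X) {r : ℝ} (hr : 0 < r) :
    μ (Metric.ball c r) ≠ ⊤ :=
  ne_top_of_le_ne_top ENNReal.ofReal_ne_top (hUD.measure_ball_le c r hr)

lemma aux_toReal_le (hUD : UpperDoubling μ Λ Cl) (c : X) {r : ℝ} (hr : 0 < r) :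
    (μ (Metric.ball c r)).toReal ≤ Λ c r :=
  ENNReal.toReal_le_of_le_ofReal (hUD.pos c r hr).le (hUD.measure_ball_le c r hr)

lemma aux_lam_six (hUD : UpperDoubling μ Λ Cl) (c : X) {s : ℝ} (hs : 0 < s) :
    Λ c (6 * s) ≤ Cl ^ 3 * Λ c s := by
  have hCl0 : (0:ℝ) < Cl := lt_of_lt_of_le one_pos hUD.one_le
  have h8 : Λ c (8 * s) ≤ Cl * Λ c (4 * s) := by
    have := hUD.le_mul_half c (8 * s) (by positivity)
    simpa [show (8:ℝ) * s / 2 = 4 * s by ring] using this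
  have h4 : Λ c (4 * s) ≤ Cl * Λ c (2 * s) := by
    have := hUD.le_mul_half c (4 * s) (by positivity)
    simpa [show (4:ℝ) * s / 2 = 2 * s by ring] using this
  have h2 : Λ c (2 * s) ≤ Cl * Λ c s := by
    have := hUD.le_mul_half c (2 * s) (by positivity)
    simpa [show (2:ℝ) * s / 2 = s by ring] using this
  have h68 : Λ c (6 * s) ≤ Λ c (8 * s) :=
    hUD.mono c (by simp [Set.mem_Ioi]; positivity) (by simp [Set.mem_Ioi]; positivity)
      (by nlinarith)
  calc Λ c (6 * s) ≤ Λ c (8 * s) := h68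
    _ ≤ Cl * Λ c (4 * s) := h8
    _ ≤ Cl * (Cl * Λ c (2 * s)) := mul_le_mul_of_nonneg_left h4 hCl0.le
    _ ≤ Cl * (Cl * (Cl * Λ c s)) :=
        mul_le_mul_of_nonneg_left (mul_le_mul_of_nonneg_left h2 hCl0.le) hCl0.le
    _ = Cl ^ 3 * Λ c s := by ring

lemma aux_lam_pow (hUD : UpperDoubling μ Λ Cl) (c : X) {s : ℝ} (hs : 0 < s) (k : ℕ) :
    Λ c ((6:ℝ) ^ k * s) ≤ (Cl ^ 3) ^ k * Λ c s := by
  have hCl0 : (0:ℝ) < Cl := lt_of_lt_of_le one_pos hUD.one_le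
  induction k with
  | zero => simp
  | succ k ih =>
    have h1 : Λ c ((6:ℝ) ^ (k+1) * s) ≤ Cl ^ 3 * Λ c ((6:ℝ) ^ k * s) := by
      have := aux_lam_six hUD c (s := (6:ℝ) ^ k * s) (by positivity)
      simpa [show (6:ℝ) * ((6:ℝ) ^ k * s) = (6:ℝ) ^ (k+1) * s by ring] using this
    calc Λ c ((6:ℝ) ^ (k+1) * s) ≤ Cl ^ 3 * Λ c ((6:ℝ) ^ k * s) := h1
      _ ≤ Cl ^ 3 * ((Cl ^ 3) ^ k * Λ c s) := by
          have : (0:ℝ) ≤ Cl ^ 3 := by positivity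
          nlinarith
      _ = (Cl ^ 3) ^ (k+1) * Λ c s := by ring

lemma aux_step (hUD : UpperDoubling μ Λ Cl) {β : ℝ} (hβ0 : 0 ≤ β) (c : X) {s : ℝ}
    (hs : 0 < s) (hnd : ¬ IsDoublingBall μ β c s) :
    β * (μ (Metric.ball c s)).toReal ≤ (μ (Metric.ball c (6 * s))).toReal := by
  have hlt : ENNReal.ofReal β * μ (Metric.ball c s) ≤ μ (Metric.ball c (6 * s)) :=
    (lt_of_not_ge hnd).le
  have := ENNReal.toReal_mono (aux_mu_ne_top hUD c (by positivity)) hlt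
  rwa [ENNReal.toReal_mul, ENNReal.toReal_ofReal hβ0] at this

lemma aux_exists_doubling (hUD : UpperDoubling μ Λ Cl) {β : ℝ} (hβ : Cl ^ 3 < β)
    (c : X) {r : ℝ} (hr : 0 < r) :
    ∃ j : ℕ, IsDoublingBall μ β c ((6:ℝ) ^ j * r) := by
  have hCl0 : (0:ℝ) < Cl := lt_of_lt_of_le one_pos hUD.one_le
  have hCl3 : (0:ℝ) < Cl ^ 3 := by positivity
  have hβ0 : (0:ℝ) < β := hCl3.trans hβ
  by_contra h
  push_neg at h
  set a : ℕ → ℝ := fun j => (μ (Metric.ball c ((6:ℝ) ^ j * r))).toReal with ha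
  have hstep : ∀ j : ℕ, β * a j ≤ a (j + 1) := by
    intro j
    have := aux_step hUD hβ0.le c (s := (6:ℝ) ^ j * r) (by positivity) (h j)
    simpa [ha, show (6:ℝ) * ((6:ℝ) ^ j * r) = (6:ℝ) ^ (j+1) * r by ring] using this
  have ha1 : 0 < a 1 := by
    have hlt : ENNReal.ofReal β * μ (Metric.ball c ((6:ℝ) ^ 0 * r)) <
        μ (Metric.ball c (6 * ((6:ℝ) ^ 0 * r))) := lt_of_not_ge (h 0)
    have hne : μ (Metric.ball c ((6:ℝ) ^ 1 * r)) ≠ 0 := by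
      intro h0
      rw [show (6:ℝ) * ((6:ℝ) ^ 0 * r) = (6:ℝ) ^ 1 * r by ring, h0] at hlt
      simp at hlt
    exact ENNReal.toReal_pos hne (aux_mu_ne_top hUD c (by positivity))
  have hgrow : ∀ i : ℕ, β ^ i * a 1 ≤ a (1 + i) := by
    intro i
    induction i with
    | zero => simp
    | succ i ih =>
      calc β ^ (i+1) * a 1 = β * (β ^ i * a 1) := by ring
        _ ≤ β * a (1 + i) := by nlinarith
        _ ≤ a (1 + i + 1) := hstep (1 + i)
      |>.trans_eq (by ring_nf)
  have hup : ∀ i : ℕ, a (1 + i) ≤ (Cl ^ 3) ^ i * Λ c (6 * r) := by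
    intro i
    have h1 : a (1 + i) ≤ Λ c ((6:ℝ) ^ (1 + i) * r) :=
      aux_toReal_le hUD c (by positivity)
    have h2 : Λ c ((6:ℝ) ^ (1 + i) * r) ≤ (Cl ^ 3) ^ i * Λ c (6 * r) := by
      have := aux_lam_pow hUD c (s := 6 * r) (by positivity) i
      simpa [show (6:ℝ) ^ i * (6 * r) = (6:ℝ) ^ (1 + i) * r by
        rw [pow_add]; ring] using this
    exact h1.trans h2
  obtain ⟨i, hi⟩ := pow_unbounded_of_one_lt (Λ c (6 * r) / a 1 * 1)
    (show (1:ℝ) < β / Cl ^ 3 from (one_lt_div hCl3).mpr hβ)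
  have hkey : β ^ i * a 1 ≤ (Cl ^ 3) ^ i * Λ c (6 * r) := (hgrow i).trans (hup i)
  have : (β / Cl ^ 3) ^ i ≤ Λ c (6 * r) / a 1 := by
    rw [div_pow, div_le_div_iff₀ (by positivity) ha1]
    nlinarith [pow_pos hCl3 i]
  rw [mul_one] at hi
  exact absurd this (not_le.mpr hi)

lemma aux_doubling_at_index (hUD : UpperDoubling μ Λ Cl) {β : ℝ} (hβ : Cl ^ 3 < β)
    (c : X) {r : ℝ} (hr : 0 < r) :
    IsDoublingBall μ β c ((6:ℝ) ^ (doublingIndex μ β c r) * r) :=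
  Nat.sInf_mem (aux_exists_doubling hUD hβ c hr)

lemma aux_tail (hUD : UpperDoubling μ Λ Cl) {β : ℝ} (hβ : Cl ^ 3 < β)
    (c : X) {r : ℝ} (hr : 0 < r) :
    ∀ d j : ℕ, doublingIndex μ β c r = j + d →
      (μ (Metric.ball c ((6:ℝ) ^ j * r))).toReal ≤
        (Cl ^ 3 / β) ^ d * Λ c ((6:ℝ) ^ j * r) := by
  have hCl0 : (0:ℝ) < Cl := lt_of_lt_of_le one_pos hUD.one_le
  have hCl3 : (0:ℝ) < Cl ^ 3 := by positivity
  have hβ0 : (0:ℝ) < β := hCl3.trans hβ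
  intro d
  induction d with
  | zero =>
    intro j hj
    simpa using aux_toReal_le hUD c (r := (6:ℝ) ^ j * r) (by positivity)
  | succ d ih =>
    intro j hj
    have hjlt : j < doublingIndex μ β c r := by omega
    have hnd : ¬ IsDoublingBall μ β c ((6:ℝ) ^ j * r) :=
      Nat.notMem_of_lt_sInf hjlt
    have hstep := aux_step hUD hβ0.le c (s := (6:ℝ) ^ j * r) (by positivity) hnd
    rw [show (6:ℝ) * ((6:ℝ) ^ j * r) = (6:ℝ) ^ (j+1) * r by ring] at hstep
    have hih := ih (j + 1) (by omega)
    have hlam : Λ c ((6:ℝ) ^ (j+1) * r) ≤ Cl ^ 3 * Λ c ((6:ℝ) ^ j * r) := by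
      have := aux_lam_six hUD c (s := (6:ℝ) ^ j * r) (by positivity)
      simpa [show (6:ℝ) * ((6:ℝ) ^ j * r) = (6:ℝ) ^ (j+1) * r by ring] using this
    have hμ0 : (0:ℝ) ≤ (μ (Metric.ball c ((6:ℝ) ^ (j+1) * r))).toReal :=
      ENNReal.toReal_nonneg
    have hq0 : (0:ℝ) < (Cl ^ 3 / β) ^ d := by positivity
    have : β * (μ (Metric.ball c ((6:ℝ) ^ j * r))).toReal ≤
        (Cl ^ 3 / β) ^ d * (Cl ^ 3 * Λ c ((6:ℝ) ^ j * r)) := by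
      calc β * (μ (Metric.ball c ((6:ℝ) ^ j * r))).toReal
          ≤ (μ (Metric.ball c ((6:ℝ) ^ (j+1) * r))).toReal := hstep
        _ ≤ (Cl ^ 3 / β) ^ d * Λ c ((6:ℝ) ^ (j+1) * r) := hih
        _ ≤ (Cl ^ 3 / β) ^ d * (Cl ^ 3 * Λ c ((6:ℝ) ^ j * r)) := by nlinarith
    have hgoal : (Cl ^ 3 / β) ^ d * (Cl ^ 3 / β) * Λ c ((6:ℝ) ^ j * r) =
        ((Cl ^ 3 / β) ^ d * (Cl ^ 3 * Λ c ((6:ℝ) ^ j * r))) / β := by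
      field_simp
    rw [pow_succ, hgoal, le_div_iff₀ hβ0]
    linarith [this]

lemma aux_NBS_mem {rB rS : ℝ} (hrB : 0 < rB) (hrS : 0 < rS) :
    1 ≤ NBS rB rS ∧ rS ≤ 6 ^ (NBS rB rS) * rB := by
  have : ∃ N : ℕ, 1 ≤ N ∧ rS ≤ 6 ^ N * rB := by
    obtain ⟨n, hn⟩ := pow_unbounded_of_one_lt (rS / rB) (show (1:ℝ) < 6 by norm_num)
    refine ⟨n + 1, by omega, ?_⟩
    have h1 : rS < 6 ^ n * rB := by
      rw [div_lt_iff₀ hrB] at hn; linarith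
    have h2 : (6:ℝ) ^ n * rB ≤ 6 ^ (n+1) * rB := by
      have : (6:ℝ) ^ n ≤ 6 ^ (n+1) := pow_le_pow_right₀ (by norm_num) (by omega)
      nlinarith
    linarith
  exact Nat.sInf_mem this

lemma aux_NBS_pow {r : ℝ} (hr : 0 < r) {a b : ℕ} (hab : a < b) :
    NBS ((6:ℝ) ^ a * r) ((6:ℝ) ^ b * r) = b - a := by
  have hmem : (b - a) ∈ {N : ℕ | 1 ≤ N ∧ (6:ℝ) ^ b * r ≤ 6 ^ N * ((6:ℝ) ^ a * r)} := by
    constructor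
    · omega
    · rw [show (6:ℝ) ^ (b - a) * ((6:ℝ) ^ a * r) = (6:ℝ) ^ (b - a + a) * r by
        rw [pow_add]; ring, show b - a + a = b by omega]
  refine le_antisymm (Nat.sInf_le hmem) ?_
  apply le_csInf ⟨_, hmem⟩
  rintro k ⟨hk1, hk2⟩
  by_contra hlt
  push_neg at hlt
  have h1 : (6:ℝ) ^ (k + a) < 6 ^ b := by
    apply pow_lt_pow_right₀ (by norm_num) (by omega)
  have h2 : (6:ℝ) ^ k * ((6:ℝ) ^ a * r) = (6:ℝ) ^ (k + a) * r := by
    rw [pow_add]; ring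
  rw [h2] at hk2
  nlinarith

lemma aux_Ktilde_eq (μ : MeasureTheory.Measure X) (Λ : X → ℝ → ℝ) (α : ℝ) (c : X)
    {r : ℝ} (hr : 0 < r) {a b : ℕ} (hab : a < b) :
    Ktilde μ Λ α c ((6:ℝ) ^ a * r) ((6:ℝ) ^ b * r) =
      1 + ∑ j ∈ Finset.Ioc a b,
        ((μ (Metric.ball c ((6:ℝ) ^ j * r))).toReal / Λ c ((6:ℝ) ^ j * r)) ^ (1 - α) := by
  rw [Ktilde, aux_NBS_pow hr hab]
  congr 1
  have hrw : ∀ k : ℕ, (6:ℝ) ^ k * ((6:ℝ) ^ a * r) = (6:ℝ) ^ (a + k) * r := by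
    intro k; rw [pow_add]; ring
  calc ∑ k ∈ Finset.Icc 1 (b - a),
      ((μ (Metric.ball c ((6:ℝ) ^ k * ((6:ℝ) ^ a * r)))).toReal /
        Λ c ((6:ℝ) ^ k * ((6:ℝ) ^ a * r))) ^ (1 - α)
      = ∑ k ∈ Finset.Ioc 0 (b - a),
        ((μ (Metric.ball c ((6:ℝ) ^ (a + k) * r))).toReal /
          Λ c ((6:ℝ) ^ (a + k) * r)) ^ (1 - α) := by
        rw [← Finset.Icc_add_one_left_eq_Ioc]
        exact Finset.sum_congr rfl fun k _ => by rw [hrw]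
    _ = ∑ j ∈ Finset.Ioc a b,
        ((μ (Metric.ball c ((6:ℝ) ^ j * r))).toReal / Λ c ((6:ℝ) ^ j * r)) ^ (1 - α) := by
        rw [show Finset.Ioc a b = Finset.Ioc (a + 0) (a + (b - a)) by
            rw [add_zero, show a + (b - a) = b by omega],
          ← Finset.map_add_left_Ioc, Finset.sum_map]
        simp only [addLeftEmbedding_apply]

lemma aux_shift_sum (D : ℕ → ℝ) (a s : ℕ) :
    ∑ j ∈ Finset.Ioc a (a + s), D j = ∑ i ∈ Finset.Ioc 0 s, D (a + i) := by
  rw [show Finset.Ioc a (a + s) = Finset.Ioc (a + 0) (a + s) by rw [add_zero],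
    ← Finset.map_add_left_Ioc, Finset.sum_map]
  simp [addLeftEmbedding_apply]

lemma aux_geom {q : ℝ} (h0 : 0 ≤ q) (h1 : q < 1) (t : ℕ) :
    ∑ i ∈ Finset.Ioc 0 t, q ^ (t - i) ≤ (1 - q)⁻¹ := by
  have h1q : 0 < 1 - q := by linarith
  induction t with
  | zero =>
    simp only [Finset.Ioc_self, Finset.sum_empty]
    positivity
  | succ t ih =>
    rw [Finset.sum_Ioc_succ_top (Nat.zero_le _), Nat.sub_self, pow_zero]
    have hrw : ∑ i ∈ Finset.Ioc 0 t, q ^ (t + 1 - i) = q * ∑ i ∈ Finset.Ioc 0 t, q ^ (t - i) := by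
      rw [Finset.mul_sum]
      refine Finset.sum_congr rfl fun i hi => ?_
      rw [Finset.mem_Ioc] at hi
      rw [show t + 1 - i = (t - i) + 1 by omega, pow_succ]
      ring
    rw [hrw]
    have h2 : q * ∑ i ∈ Finset.Ioc 0 t, q ^ (t - i) ≤ q * (1 - q)⁻¹ :=
      mul_le_mul_of_nonneg_left ih h0
    have h3 : q * (1 - q)⁻¹ + 1 = (1 - q)⁻¹ := by field_simp; ring
    linarith


/-- The summand in `Ktilde`. -/
def auxD (μ : MeasureTheory.Measure X) (Λ : X → ℝ → ℝ) (α : ℝ) (c : X) (r : ℝ) (j : ℕ) : ℝ :=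
  ((μ (Metric.ball c ((6:ℝ) ^ j * r))).toReal / Λ c ((6:ℝ) ^ j * r)) ^ (1 - α)

lemma aux_pow_rpow {z : ℝ} (hz : 0 ≤ z) (γ : ℝ) (n : ℕ) : (z ^ n) ^ γ = (z ^ γ) ^ n := by
  rw [← Real.rpow_natCast z n, ← Real.rpow_mul hz, mul_comm, Real.rpow_mul hz,
    Real.rpow_natCast]

lemma aux_D_nonneg (hUD : UpperDoubling μ Λ Cl) (α : ℝ) (c : X) {r : ℝ} (hr : 0 < r)
    (j : ℕ) : 0 ≤ auxD μ Λ α c r j :=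
  Real.rpow_nonneg
    (div_nonneg ENNReal.toReal_nonneg (hUD.pos c _ (by positivity)).le) _

lemma aux_D_le_one (hUD : UpperDoubling μ Λ Cl) {α : ℝ} (hα0 : 0 ≤ α) (hα1 : α < 1)
    (c : X) {r : ℝ} (hr : 0 < r) (j : ℕ) : auxD μ Λ α c r j ≤ 1 := by
  have hpos := hUD.pos c ((6:ℝ) ^ j * r) (by positivity)
  exact Real.rpow_le_one (div_nonneg ENNReal.toReal_nonneg hpos.le)
    ((div_le_one hpos).mpr (aux_toReal_le hUD c (by positivity))) (by linarith)

lemma aux_D_shift (μ : MeasureTheory.Measure X) (Λ : X → ℝ → ℝ) (α : ℝ) (c : X)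
    (r : ℝ) (m i : ℕ) : auxD μ Λ α c ((6:ℝ) ^ m * r) i = auxD μ Λ α c r (m + i) := by
  simp only [auxD, show (6:ℝ) ^ i * ((6:ℝ) ^ m * r) = (6:ℝ) ^ (m + i) * r by
    rw [pow_add]; ring]

lemma aux_D_le_q (hUD : UpperDoubling μ Λ Cl) {β : ℝ} (hβ : Cl ^ 3 < β) {α : ℝ}
    (hα0 : 0 ≤ α) (hα1 : α < 1) (c : X) {r : ℝ} (hr : 0 < r) {i : ℕ}
    (hi : i ≤ doublingIndex μ β c r) :
    auxD μ Λ α c r i ≤ ((Cl ^ 3 / β) ^ (1 - α)) ^ (doublingIndex μ β c r - i) := by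
  have hCl0 : (0:ℝ) < Cl := lt_of_lt_of_le one_pos hUD.one_le
  have hβ0 : (0:ℝ) < β := (show (0:ℝ) < Cl ^ 3 by positivity).trans hβ
  have htail := aux_tail hUD hβ c hr (doublingIndex μ β c r - i) i (by omega)
  have hpos := hUD.pos c ((6:ℝ) ^ i * r) (by positivity)
  have hratio : (μ (Metric.ball c ((6:ℝ) ^ i * r))).toReal / Λ c ((6:ℝ) ^ i * r) ≤
      (Cl ^ 3 / β) ^ (doublingIndex μ β c r - i) := (div_le_iff₀ hpos).mpr htail
  calc auxD μ Λ α c r i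
      ≤ ((Cl ^ 3 / β) ^ (doublingIndex μ β c r - i)) ^ (1 - α) :=
        Real.rpow_le_rpow (div_nonneg ENNReal.toReal_nonneg hpos.le) hratio (by linarith)
    _ = _ := aux_pow_rpow (by positivity) _ _

lemma aux_tail_sum (hUD : UpperDoubling μ Λ Cl) {β : ℝ} (hβ : Cl ^ 3 < β) {α : ℝ}
    (hα0 : 0 ≤ α) (hα1 : α < 1) (c : X) {r : ℝ} (hr : 0 < r) (m : ℕ) :
    ∑ j ∈ Finset.Ioc m (m + doublingIndex μ β c ((6:ℝ) ^ m * r)), auxD μ Λ α c r j ≤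
      (1 - (Cl ^ 3 / β) ^ (1 - α))⁻¹ := by
  have hCl0 : (0:ℝ) < Cl := lt_of_lt_of_le one_pos hUD.one_le
  have hβ0 : (0:ℝ) < β := (show (0:ℝ) < Cl ^ 3 by positivity).trans hβ
  have hq0 : (0:ℝ) ≤ (Cl ^ 3 / β) ^ (1 - α) := Real.rpow_nonneg (by positivity) _
  have hq1 : (Cl ^ 3 / β) ^ (1 - α) < 1 :=
    Real.rpow_lt_one (by positivity) ((div_lt_one hβ0).mpr hβ) (by linarith)
  rw [aux_shift_sum]
  calc ∑ i ∈ Finset.Ioc 0 (doublingIndex μ β c ((6:ℝ) ^ m * r)), auxD μ Λ α c r (m + i)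
      ≤ ∑ i ∈ Finset.Ioc 0 (doublingIndex μ β c ((6:ℝ) ^ m * r)),
          ((Cl ^ 3 / β) ^ (1 - α)) ^ (doublingIndex μ β c ((6:ℝ) ^ m * r) - i) := by
        refine Finset.sum_le_sum fun i hi => ?_
        rw [Finset.mem_Ioc] at hi
        rw [← aux_D_shift μ Λ α c r m i]
        exact aux_D_le_q hUD hβ hα0 hα1 c (by positivity) hi.2
    _ ≤ _ := aux_geom hq0 hq1 _

lemma aux_Ktilde_unfold (μ : MeasureTheory.Measure X) (Λ : X → ℝ → ℝ) (α : ℝ) (c : X)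
    (rB rS : ℝ) :
    Ktilde μ Λ α c rB rS = 1 + ∑ j ∈ Finset.Ioc 0 (NBS rB rS), auxD μ Λ α c rB j := by
  have hIcc : Finset.Icc 1 (NBS rB rS) = Finset.Ioc 0 (NBS rB rS) := by
    ext k
    simp [Finset.mem_Icc, Finset.mem_Ioc, Nat.succ_le_iff]
  rw [Ktilde, hIcc]
  rfl

lemma aux_Ktilde_eqD (μ : MeasureTheory.Measure X) (Λ : X → ℝ → ℝ) (α : ℝ) (c : X)
    {r : ℝ} (hr : 0 < r) {a b : ℕ} (hab : a < b) :
    Ktilde μ Λ α c ((6:ℝ) ^ a * r) ((6:ℝ) ^ b * r) =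
      1 + ∑ j ∈ Finset.Ioc a b, auxD μ Λ α c r j :=
  aux_Ktilde_eq μ Λ α c hr hab

end AuxLemmas


set_option maxHeartbeats 2000000 in
/-- Lemma 3.8: a regularity condition for a family of numbers attached to the balls
containing a fixed point `x`, stated for doubling balls, self-improves from pairs with
`K̃^{(α)}_{B,S} ≤ P̃_α` to all pairs of doubling balls. -/
theorem statement9 {X : Type*} [MetricSpace X] [MeasurableSpace X] [BorelSpace X]
    (μ : MeasureTheory.Measure X) (Λ : X → ℝ → ℝ) (Cl : ℝ) (N₀ : ℕ)
    (hGD : NonHomog.GeomDoublingWith X N₀) (hUD : NonHomog.UpperDoubling μ Λ Cl)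
    (α : ℝ) (hα : α ∈ Set.Ico (0 : ℝ) 1) :
    ∃ P : ℝ, 0 < P ∧ ∃ C₄ : ℝ, 0 < C₄ ∧
      ∀ (x : X) (Cx : ℝ), 0 < Cx → ∀ F : X → ℝ → ℝ,
        (∀ (cB : X) (rB : ℝ) (cS : X) (rS : ℝ), 0 < rB → 0 < rS →
          x ∈ Metric.ball cB rB → Metric.ball cB rB ⊆ Metric.ball cS rS →
          NonHomog.IsDoublingBall μ (NonHomog.beta6 N₀ Cl) cB rB →
          NonHomog.IsDoublingBall μ (NonHomog.beta6 N₀ Cl) cS rS →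
          NonHomog.Ktilde μ Λ α cB rB rS ≤ P →
          |F cB rB - F cS rS| ≤ NonHomog.Ktilde μ Λ α cB rB rS * Cx) →
        ∀ (cB : X) (rB : ℝ) (cS : X) (rS : ℝ), 0 < rB → 0 < rS →
          x ∈ Metric.ball cB rB → Metric.ball cB rB ⊆ Metric.ball cS rS →
          NonHomog.IsDoublingBall μ (NonHomog.beta6 N₀ Cl) cB rB →
          NonHomog.IsDoublingBall μ (NonHomog.beta6 N₀ Cl) cS rS →
          |F cB rB - F cS rS| ≤ C₄ * NonHomog.Ktilde μ Λ α cB rB rS * Cx := by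
  obtain ⟨hα0, hα1⟩ := hα
  have hCl1 : (1:ℝ) ≤ Cl := hUD.one_le
  have hCl0 : (0:ℝ) < Cl := lt_of_lt_of_le one_pos hCl1
  set β := NonHomog.beta6 N₀ Cl with hβdef
  have hβgt : Cl ^ 3 < β := by
    have hν : (0:ℝ) ≤ Real.logb 2 Cl := Real.logb_nonneg (by norm_num) hCl1
    have h0 : Cl ^ 3 = ((2:ℝ) ^ Real.logb 2 Cl) ^ 3 := by
      rw [Real.rpow_logb (by norm_num) (by norm_num) hCl0]
    have h1 : ((2:ℝ) ^ Real.logb 2 Cl) ^ (3:ℕ) = (2:ℝ) ^ ((3:ℝ) * Real.logb 2 Cl) := by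
      rw [← Real.rpow_natCast ((2:ℝ) ^ Real.logb 2 Cl) 3, ← Real.rpow_mul (by norm_num)]
      norm_num [mul_comm]
    have h2 : (2:ℝ) ^ ((3:ℝ) * Real.logb 2 Cl) ≤ (6:ℝ) ^ ((3:ℝ) * Real.logb 2 Cl) :=
      Real.rpow_le_rpow (by norm_num) (by norm_num) (by positivity)
    have h3 : (6:ℝ) ^ ((3:ℝ) * Real.logb 2 Cl) ≤
        (6:ℝ) ^ (3 * max (Real.logb 2 (N₀:ℝ)) (Real.logb 2 Cl)) :=
      Real.rpow_le_rpow_of_exponent_le (by norm_num)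
        (by nlinarith [le_max_right (Real.logb 2 (N₀:ℝ)) (Real.logb 2 Cl)])
    have h4 : (0:ℝ) < (30:ℝ) ^ Real.logb 2 (N₀:ℝ) := Real.rpow_pos_of_pos (by norm_num) _
    have h5 : (0:ℝ) < (30:ℝ) ^ Real.logb 2 Cl := Real.rpow_pos_of_pos (by norm_num) _
    have h6 : Cl ^ 3 ≤ (6:ℝ) ^ (3 * max (Real.logb 2 (N₀:ℝ)) (Real.logb 2 Cl)) := by
      rw [h0, h1]; exact h2.trans h3
    rw [hβdef, NonHomog.beta6]
    linarith
  have hβ0 : (0:ℝ) < β := (show (0:ℝ) < Cl ^ 3 by positivity).trans hβgt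
  have h1α : (0:ℝ) < 1 - α := by linarith
  set q : ℝ := (Cl ^ 3 / β) ^ (1 - α) with hq
  have hq0 : (0:ℝ) ≤ q := by rw [hq]; exact Real.rpow_nonneg (by positivity) _
  have hq1 : q < 1 := by
    rw [hq]; exact Real.rpow_lt_one (by positivity) ((div_lt_one hβ0).mpr hβgt) h1α
  set c₀ : ℝ := (1 - q)⁻¹ with hc₀
  have h1q : (0:ℝ) < 1 - q := by linarith
  have hc00 : (0:ℝ) < c₀ := by rw [hc₀]; exact inv_pos.mpr h1q
  have hc01 : (1:ℝ) ≤ c₀ := by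
    rw [hc₀]
    have := mul_inv_cancel₀ (ne_of_gt h1q)
    nlinarith [inv_pos.mpr h1q]
  have hCl7 : (1:ℝ) ≤ Cl ^ 7 := one_le_pow₀ hCl1
  set P : ℝ := 3 + Cl ^ 7 * c₀ with hP
  have hP3c : 3 + c₀ ≤ P := by rw [hP]; nlinarith
  have hP3 : (3:ℝ) ≤ P := by rw [hP]; nlinarith
  have hP0 : (0:ℝ) < P := by linarith
  refine ⟨P, hP0, P * (3 + c₀), by nlinarith, ?_⟩
  intro x Cx hCx F hyp cB rB cS rS hrB hrS hxB hBS hdB hdS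
  -- basic geometric facts
  have hx6 : ∀ a : ℕ, x ∈ Metric.ball cB ((6:ℝ) ^ a * rB) := by
    intro a
    rw [Metric.mem_ball]
    have h1 : dist x cB < rB := Metric.mem_ball.mp hxB
    have h2 : (1:ℝ) ≤ (6:ℝ) ^ a := one_le_pow₀ (by norm_num)
    nlinarith
  have hballmono : ∀ a b : ℕ, a ≤ b →
      Metric.ball cB ((6:ℝ) ^ a * rB) ⊆ Metric.ball cB ((6:ℝ) ^ b * rB) := by
    intro a b hab
    refine Metric.ball_subset_ball ?_
    have := pow_le_pow_right₀ (show (1:ℝ) ≤ 6 by norm_num) hab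
    nlinarith
  -- tail sums for concentric chains around cB
  have tail_sum : ∀ m : ℕ,
      ∑ j ∈ Finset.Ioc m (m + NonHomog.doublingIndex μ β cB ((6:ℝ) ^ m * rB)),
        auxD μ Λ α cB rB j ≤ c₀ := by
    intro m
    have := aux_tail_sum hUD hβgt hα0 hα1 cB hrB m
    rwa [← hq, ← hc₀] at this
  -- the chain claim
  have claim : ∀ d a b : ℕ, b ≤ a + d → a < b →
      NonHomog.IsDoublingBall μ β cB ((6:ℝ) ^ a * rB) →
      NonHomog.IsDoublingBall μ β cB ((6:ℝ) ^ b * rB) →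
      |F cB ((6:ℝ) ^ a * rB) - F cB ((6:ℝ) ^ b * rB)| ≤
        P * (1 + ∑ j ∈ Finset.Ioc a b, auxD μ Λ α cB rB j) * Cx := by
    intro d
    induction d with
    | zero => intro a b h1 h2 _ _; exact absurd h2 (by omega)
    | succ d ih =>
      intro a b hbd hab hda hdb
      have hsum0 : ∀ u v : ℕ, 0 ≤ ∑ j ∈ Finset.Ioc u v, auxD μ Λ α cB rB j :=
        fun u v => Finset.sum_nonneg fun j _ => aux_D_nonneg hUD α cB hrB j
      by_cases hc : 1 + ∑ j ∈ Finset.Ioc a b, auxD μ Λ α cB rB j ≤ P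
      · have hKeq := aux_Ktilde_eqD μ Λ α cB hrB hab
        have happ := hyp cB ((6:ℝ) ^ a * rB) cB ((6:ℝ) ^ b * rB) (by positivity)
          (by positivity) (hx6 a) (hballmono a b hab.le) hda hdb (by rw [hKeq]; exact hc)
        rw [hKeq] at happ
        refine happ.trans ?_
        have h1 : (0:ℝ) ≤ 1 + ∑ j ∈ Finset.Ioc a b, auxD μ Λ α cB rB j := by
          linarith [hsum0 a b]
        calc (1 + ∑ j ∈ Finset.Ioc a b, auxD μ Λ α cB rB j) * Cx
            = 1 * ((1 + ∑ j ∈ Finset.Ioc a b, auxD μ Λ α cB rB j) * Cx) := by ring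
          _ ≤ P * ((1 + ∑ j ∈ Finset.Ioc a b, auxD μ Λ α cB rB j) * Cx) :=
              mul_le_mul_of_nonneg_right (by linarith) (mul_nonneg h1 hCx.le)
          _ = P * (1 + ∑ j ∈ Finset.Ioc a b, auxD μ Λ α cB rB j) * Cx := by ring
      · push_neg at hc
        set mset := {m : ℕ | a < m ∧ m ≤ b ∧
          1 ≤ ∑ j ∈ Finset.Ioc a m, auxD μ Λ α cB rB j} with hmset
        have hbmem : b ∈ mset := ⟨hab, le_rfl, by linarith⟩
        set m := sInf mset with hmdef
        obtain ⟨ham, hmb, hm1⟩ : a < m ∧ m ≤ b ∧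
            1 ≤ ∑ j ∈ Finset.Ioc a m, auxD μ Λ α cB rB j := Nat.sInf_mem ⟨b, hbmem⟩
        have hm2 : ∑ j ∈ Finset.Ioc a m, auxD μ Λ α cB rB j ≤ 2 := by
          have hDm := aux_D_le_one hUD hα0 hα1 cB hrB m
          by_cases hma : m = a + 1
          · rw [hma, Finset.sum_Ioc_succ_top le_rfl, Finset.Ioc_self, Finset.sum_empty,
              zero_add]
            rw [hma] at hDm
            linarith
          · have hm1a : a + 1 < m := by omega
            have hnotmem : m - 1 ∉ mset :=
              Nat.notMem_of_lt_sInf (by rw [← hmdef]; omega)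
            have hlt1 : ∑ j ∈ Finset.Ioc a (m - 1), auxD μ Λ α cB rB j < 1 := by
              by_contra hge
              push_neg at hge
              exact hnotmem ⟨by omega, by omega, hge⟩
            have hsplit : ∑ j ∈ Finset.Ioc a m, auxD μ Λ α cB rB j =
                (∑ j ∈ Finset.Ioc a (m - 1), auxD μ Λ α cB rB j) + auxD μ Λ α cB rB m := by
              have := Finset.sum_Ioc_succ_top (show a ≤ m - 1 by omega)
                (fun j => auxD μ Λ α cB rB j)
              rw [show m - 1 + 1 = m by omega] at this
              exact this
            linarith
        set e := m + NonHomog.doublingIndex μ β cB ((6:ℝ) ^ m * rB) with hedef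
        have hme : m ≤ e := by omega
        have hde : NonHomog.IsDoublingBall μ β cB ((6:ℝ) ^ e * rB) := by
          have := aux_doubling_at_index hUD hβgt cB (r := (6:ℝ) ^ m * rB) (by positivity)
          rwa [show (6:ℝ) ^ (NonHomog.doublingIndex μ β cB ((6:ℝ) ^ m * rB)) *
              ((6:ℝ) ^ m * rB) = (6:ℝ) ^ e * rB by rw [hedef, pow_add]; ring] at this
        have htail_me : ∑ j ∈ Finset.Ioc m e, auxD μ Λ α cB rB j ≤ c₀ := tail_sum m
        have heb : e < b := by
          by_contra hh
          push_neg at hh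
          have h1 : ∑ j ∈ Finset.Ioc a b, auxD μ Λ α cB rB j =
              (∑ j ∈ Finset.Ioc a m, auxD μ Λ α cB rB j) +
                ∑ j ∈ Finset.Ioc m b, auxD μ Λ α cB rB j :=
            (Finset.sum_Ioc_consecutive _ ham.le hmb).symm
          have h2 : ∑ j ∈ Finset.Ioc m b, auxD μ Λ α cB rB j ≤
              ∑ j ∈ Finset.Ioc m e, auxD μ Λ α cB rB j :=
            Finset.sum_le_sum_of_subset_of_nonneg
              (Finset.Ioc_subset_Ioc le_rfl hh)
              (fun j _ _ => aux_D_nonneg hUD α cB hrB j)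
          linarith
        have hae : a < e := lt_of_lt_of_le ham hme
        have hSae : ∑ j ∈ Finset.Ioc a e, auxD μ Λ α cB rB j =
            (∑ j ∈ Finset.Ioc a m, auxD μ Λ α cB rB j) +
              ∑ j ∈ Finset.Ioc m e, auxD μ Λ α cB rB j :=
          (Finset.sum_Ioc_consecutive _ ham.le hme).symm
        have hKae := aux_Ktilde_eqD μ Λ α cB hrB hae
        have hKaeP : NonHomog.Ktilde μ Λ α cB ((6:ℝ) ^ a * rB) ((6:ℝ) ^ e * rB) ≤ P := by
          rw [hKae, hSae]
          linarith
        have hl1 := hyp cB ((6:ℝ) ^ a * rB) cB ((6:ℝ) ^ e * rB) (by positivity)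
          (by positivity) (hx6 a) (hballmono a e hae.le) hda hde hKaeP
        rw [hKae] at hl1
        have hl1' : |F cB ((6:ℝ) ^ a * rB) - F cB ((6:ℝ) ^ e * rB)| ≤ P * Cx := by
          refine hl1.trans (mul_le_mul_of_nonneg_right ?_ hCx.le)
          rw [hSae]
          linarith
        have hl2 := ih e b (by omega) heb hde hdb
        have hSab : ∑ j ∈ Finset.Ioc a b, auxD μ Λ α cB rB j =
            (∑ j ∈ Finset.Ioc a e, auxD μ Λ α cB rB j) +
              ∑ j ∈ Finset.Ioc e b, auxD μ Λ α cB rB j :=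
          (Finset.sum_Ioc_consecutive _ hae.le heb.le).symm
        have htri : |F cB ((6:ℝ) ^ a * rB) - F cB ((6:ℝ) ^ b * rB)| ≤
            |F cB ((6:ℝ) ^ a * rB) - F cB ((6:ℝ) ^ e * rB)| +
              |F cB ((6:ℝ) ^ e * rB) - F cB ((6:ℝ) ^ b * rB)| :=
          abs_sub_le _ _ _
        have hkey : 2 + ∑ j ∈ Finset.Ioc e b, auxD μ Λ α cB rB j ≤
            1 + ∑ j ∈ Finset.Ioc a b, auxD μ Λ α cB rB j := by
          rw [hSab, hSae]
          linarith [hsum0 m e]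
        calc |F cB ((6:ℝ) ^ a * rB) - F cB ((6:ℝ) ^ b * rB)|
            ≤ P * Cx + P * (1 + ∑ j ∈ Finset.Ioc e b, auxD μ Λ α cB rB j) * Cx := by
              linarith
          _ = P * (2 + ∑ j ∈ Finset.Ioc e b, auxD μ Λ α cB rB j) * Cx := by ring
          _ ≤ P * (1 + ∑ j ∈ Finset.Ioc a b, auxD μ Λ α cB rB j) * Cx :=
              mul_le_mul_of_nonneg_right
                (mul_le_mul_of_nonneg_left hkey hP0.le) hCx.le
  -- main argument
  set N := NonHomog.NBS rB rS with hNdef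
  obtain ⟨hN1, hNle⟩ := aux_NBS_mem hrB hrS
  have hKBS := aux_Ktilde_unfold μ Λ α cB rB rS
  rw [← hNdef] at hKBS
  have hS00 : 0 ≤ ∑ j ∈ Finset.Ioc 0 N, auxD μ Λ α cB rB j :=
    Finset.sum_nonneg fun j _ => aux_D_nonneg hUD α cB hrB j
  have hK1 : 1 ≤ NonHomog.Ktilde μ Λ α cB rB rS := by rw [hKBS]; linarith
  by_cases hdir : NonHomog.Ktilde μ Λ α cB rB rS ≤ P
  · have happ := hyp cB rB cS rS hrB hrS hxB hBS hdB hdS hdir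
    refine happ.trans ?_
    have h12 : (1:ℝ) ≤ P * (3 + c₀) := by nlinarith
    calc NonHomog.Ktilde μ Λ α cB rB rS * Cx
        = 1 * (NonHomog.Ktilde μ Λ α cB rB rS * Cx) := (one_mul _).symm
      _ ≤ (P * (3 + c₀)) * (NonHomog.Ktilde μ Λ α cB rB rS * Cx) :=
          mul_le_mul_of_nonneg_right h12 (mul_nonneg (by linarith) hCx.le)
      _ = P * (3 + c₀) * NonHomog.Ktilde μ Λ α cB rB rS * Cx := by ring
  · push_neg at hdir
    -- N ≥ 2
    have hKleN : NonHomog.Ktilde μ Λ α cB rB rS ≤ 1 + (N : ℝ) := by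
      rw [hKBS]
      have h1 : ∑ j ∈ Finset.Ioc 0 N, auxD μ Λ α cB rB j ≤ (N : ℝ) := by
        calc ∑ j ∈ Finset.Ioc 0 N, auxD μ Λ α cB rB j
            ≤ ∑ _j ∈ Finset.Ioc 0 N, (1:ℝ) :=
              Finset.sum_le_sum fun j _ => aux_D_le_one hUD hα0 hα1 cB hrB j
          _ = (N : ℝ) := by simp
      linarith
    have hN2 : 2 ≤ N := by
      by_contra hh
      push_neg at hh
      have hNN : N = 1 := by omega
      rw [hNN] at hKleN
      norm_num at hKleN
      linarith
    have hNlt : (6:ℝ) ^ (N - 1) * rB < rS := by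
      have hnotmem : N - 1 ∉ {M : ℕ | 1 ≤ M ∧ rS ≤ 6 ^ M * rB} :=
        Nat.notMem_of_lt_sInf (show N - 1 < NonHomog.NBS rB rS by omega)
      by_contra hh
      push_neg at hh
      exact hnotmem ⟨by omega, hh⟩
    have hdistBS : dist cB cS < rS := by
      have := hBS (Metric.mem_ball_self hrB)
      rwa [Metric.mem_ball] at this
    set t := NonHomog.doublingIndex μ β cB ((6:ℝ) ^ (N + 1) * rB) with htdef
    set b₀ := N + 1 + t with hb0def
    have hdQ : NonHomog.IsDoublingBall μ β cB ((6:ℝ) ^ b₀ * rB) := by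
      have := aux_doubling_at_index hUD hβgt cB (r := (6:ℝ) ^ (N + 1) * rB)
        (by positivity)
      rw [← htdef] at this
      rwa [show (6:ℝ) ^ t * ((6:ℝ) ^ (N + 1) * rB) = (6:ℝ) ^ b₀ * rB by
        rw [hb0def, pow_add]; ring] at this
    -- leg 1 : from B to the big doubling ball
    have hd0 : NonHomog.IsDoublingBall μ β cB ((6:ℝ) ^ (0:ℕ) * rB) := by
      rw [pow_zero, one_mul]; exact hdB
    have hleg1 := claim b₀ 0 b₀ (by omega) (by omega) hd0 hdQ
    rw [pow_zero, one_mul] at hleg1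
    have e1 : ∑ j ∈ Finset.Ioc 0 b₀, auxD μ Λ α cB rB j =
        (∑ j ∈ Finset.Ioc 0 N, auxD μ Λ α cB rB j) +
          ∑ j ∈ Finset.Ioc N b₀, auxD μ Λ α cB rB j :=
      (Finset.sum_Ioc_consecutive _ (Nat.zero_le N) (by omega)).symm
    have e2 : ∑ j ∈ Finset.Ioc N b₀, auxD μ Λ α cB rB j =
        (∑ j ∈ Finset.Ioc N (N + 1), auxD μ Λ α cB rB j) +
          ∑ j ∈ Finset.Ioc (N + 1) b₀, auxD μ Λ α cB rB j :=
      (Finset.sum_Ioc_consecutive _ (by omega) (by omega)).symm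
    have e3 : ∑ j ∈ Finset.Ioc N (N + 1), auxD μ Λ α cB rB j =
        auxD μ Λ α cB rB (N + 1) := by
      rw [Finset.sum_Ioc_succ_top le_rfl, Finset.Ioc_self, Finset.sum_empty, zero_add]
    have e4 : auxD μ Λ α cB rB (N + 1) ≤ 1 := aux_D_le_one hUD hα0 hα1 cB hrB (N + 1)
    have e5 : ∑ j ∈ Finset.Ioc (N + 1) b₀, auxD μ Λ α cB rB j ≤ c₀ := by
      have := tail_sum (N + 1)
      rwa [← htdef, ← hb0def] at this
    have hsumb0 : ∑ j ∈ Finset.Ioc 0 b₀, auxD μ Λ α cB rB j ≤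
        (∑ j ∈ Finset.Ioc 0 N, auxD μ Λ α cB rB j) + 1 + c₀ := by
      rw [e1, e2, e3]
      linarith
    have hleg1' : |F cB rB - F cB ((6:ℝ) ^ b₀ * rB)| ≤
        P * (2 + (∑ j ∈ Finset.Ioc 0 N, auxD μ Λ α cB rB j) + c₀) * Cx := by
      refine hleg1.trans (mul_le_mul_of_nonneg_right
        (mul_le_mul_of_nonneg_left ?_ hP0.le) hCx.le)
      linarith
    -- leg 2 : from S to the big doubling ball
    have hxS : x ∈ Metric.ball cS rS := hBS hxB
    have hSQ : Metric.ball cS rS ⊆ Metric.ball cB ((6:ℝ) ^ b₀ * rB) := by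
      intro y hy
      rw [Metric.mem_ball] at hy ⊢
      have h1 : dist y cB ≤ dist y cS + dist cS cB := dist_triangle y cS cB
      have h2 : dist cS cB < rS := by rw [dist_comm]; exact hdistBS
      have h4 : 2 * ((6:ℝ) ^ N * rB) ≤ (6:ℝ) ^ (N + 1) * rB := by
        rw [pow_succ]
        nlinarith [pow_pos (show (0:ℝ) < 6 by norm_num) N]
      have h5 : (6:ℝ) ^ (N + 1) * rB ≤ (6:ℝ) ^ b₀ * rB := by
        have := pow_le_pow_right₀ (show (1:ℝ) ≤ 6 by norm_num) (show N + 1 ≤ b₀ by omega)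
        nlinarith
      linarith
    set MQ := NonHomog.NBS rS ((6:ℝ) ^ b₀ * rB) with hMQdef
    have hMQle : MQ ≤ t + 2 := by
      have hmem : (t + 2) ∈ {M : ℕ | 1 ≤ M ∧ (6:ℝ) ^ b₀ * rB ≤ 6 ^ M * rS} := by
        constructor
        · omega
        · have h1 : (6:ℝ) ^ b₀ * rB = (6:ℝ) ^ (t + 2) * ((6:ℝ) ^ (N - 1) * rB) := by
            rw [show b₀ = (t + 2) + (N - 1) by omega, pow_add]; ring
          have h2 : (0:ℝ) < (6:ℝ) ^ (t + 2) := by positivity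
          rw [h1]
          nlinarith
      exact Nat.sInf_le hmem
    -- estimate the terms of Ktilde for the pair (S, Q)
    have hterm : ∀ k ∈ Finset.Ioc 0 t, auxD μ Λ α cS rS k ≤ Cl ^ 7 * q ^ (t - k) := by
      intro k hk
      rw [Finset.mem_Ioc] at hk
      have hk1 : 1 ≤ k := hk.1
      have hkt : k ≤ t := hk.2
      have h6k : (0:ℝ) < (6:ℝ) ^ k := by positivity
      -- inclusion of 6^k S in 6^(N+1+k) B
      have hsub2 : Metric.ball cS ((6:ℝ) ^ k * rS) ⊆
          Metric.ball cB ((6:ℝ) ^ (N + 1 + k) * rB) := by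
        intro y hy
        rw [Metric.mem_ball] at hy ⊢
        have hd : dist y cB ≤ dist y cS + dist cS cB := dist_triangle y cS cB
        have h1 : dist cS cB < rS := by rw [dist_comm]; exact hdistBS
        have h2 : (1:ℝ) ≤ (6:ℝ) ^ k := one_le_pow₀ (by norm_num)
        have h3 : (6:ℝ) ^ k * rS ≤ (6:ℝ) ^ k * ((6:ℝ) ^ N * rB) := by nlinarith
        have he : (6:ℝ) ^ (N + 1 + k) = 6 * ((6:ℝ) ^ N * (6:ℝ) ^ k) := by
          rw [show N + 1 + k = (N + k) + 1 by omega, pow_succ, pow_add]; ring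
        have h4 : 2 * ((6:ℝ) ^ k * ((6:ℝ) ^ N * rB)) ≤ (6:ℝ) ^ (N + 1 + k) * rB := by
          rw [he]
          nlinarith [pow_pos (show (0:ℝ) < 6 by norm_num) N,
            pow_pos (show (0:ℝ) < 6 by norm_num) k]
        nlinarith
      have num2 : (μ (Metric.ball cS ((6:ℝ) ^ k * rS))).toReal ≤
          (μ (Metric.ball cB ((6:ℝ) ^ (N + 1 + k) * rB))).toReal :=
        ENNReal.toReal_mono (aux_mu_ne_top hUD cB (by positivity))
          (measure_mono hsub2)
      have num3 : (μ (Metric.ball cB ((6:ℝ) ^ (N + 1 + k) * rB))).toReal ≤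
          (Cl ^ 3 / β) ^ (t - k) * Λ cB ((6:ℝ) ^ (N + 1 + k) * rB) := by
        have := aux_tail hUD hβgt cB (r := (6:ℝ) ^ (N + 1) * rB) (by positivity)
          (t - k) k (by rw [← htdef]; omega)
        rwa [show (6:ℝ) ^ k * ((6:ℝ) ^ (N + 1) * rB) = (6:ℝ) ^ (N + 1 + k) * rB by
          rw [pow_add]; ring] at this
      have hden : Λ cB ((6:ℝ) ^ (N + 1 + k) * rB) ≤ Cl ^ 7 * Λ cS ((6:ℝ) ^ k * rS) := by
        have s1 := aux_lam_pow hUD cB (s := (6:ℝ) ^ (N - 1 + k) * rB) (by positivity) 2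
        rw [show (6:ℝ) ^ (2:ℕ) * ((6:ℝ) ^ (N - 1 + k) * rB) =
            (6:ℝ) ^ (N + 1 + k) * rB by
          rw [show N + 1 + k = (N - 1 + k) + 2 by omega, pow_add]; ring] at s1
        have hdle : dist cB cS ≤ (6:ℝ) ^ (N - 1 + k) * rB := by
          have h1 : (6:ℝ) ^ N ≤ (6:ℝ) ^ (N - 1 + k) :=
            pow_le_pow_right₀ (by norm_num) (by omega)
          nlinarith [hNle, hdistBS]
        have s2 : Λ cB ((6:ℝ) ^ (N - 1 + k) * rB) ≤ Cl * Λ cS ((6:ℝ) ^ (N - 1 + k) * rB) :=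
          hUD.compat cB cS _ (by positivity) hdle
        have s3 : Λ cS ((6:ℝ) ^ (N - 1 + k) * rB) ≤ Λ cS ((6:ℝ) ^ k * rS) := by
          refine hUD.mono cS (by simp [Set.mem_Ioi]; positivity)
            (by simp [Set.mem_Ioi]; positivity) ?_
          have h1 : (6:ℝ) ^ (N - 1 + k) = (6:ℝ) ^ k * (6:ℝ) ^ (N - 1) := by
            rw [pow_add]; ring
          rw [h1]
          nlinarith [hNlt.le]
        calc Λ cB ((6:ℝ) ^ (N + 1 + k) * rB)
            ≤ (Cl ^ 3) ^ 2 * Λ cB ((6:ℝ) ^ (N - 1 + k) * rB) := s1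
          _ ≤ (Cl ^ 3) ^ 2 * (Cl * Λ cS ((6:ℝ) ^ (N - 1 + k) * rB)) :=
              mul_le_mul_of_nonneg_left s2 (by positivity)
          _ ≤ (Cl ^ 3) ^ 2 * (Cl * Λ cS ((6:ℝ) ^ k * rS)) :=
              mul_le_mul_of_nonneg_left
                (mul_le_mul_of_nonneg_left s3 hCl0.le) (by positivity)
          _ = Cl ^ 7 * Λ cS ((6:ℝ) ^ k * rS) := by ring
      have hposS := hUD.pos cS ((6:ℝ) ^ k * rS) (by positivity)
      have hratioS : (μ (Metric.ball cS ((6:ℝ) ^ k * rS))).toReal /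
          Λ cS ((6:ℝ) ^ k * rS) ≤ Cl ^ 7 * (Cl ^ 3 / β) ^ (t - k) := by
        rw [div_le_iff₀ hposS]
        calc (μ (Metric.ball cS ((6:ℝ) ^ k * rS))).toReal
            ≤ (Cl ^ 3 / β) ^ (t - k) * Λ cB ((6:ℝ) ^ (N + 1 + k) * rB) :=
              num2.trans num3
          _ ≤ (Cl ^ 3 / β) ^ (t - k) * (Cl ^ 7 * Λ cS ((6:ℝ) ^ k * rS)) :=
              mul_le_mul_of_nonneg_left hden (by positivity)
          _ = Cl ^ 7 * (Cl ^ 3 / β) ^ (t - k) * Λ cS ((6:ℝ) ^ k * rS) := by ring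
      have h1 : auxD μ Λ α cS rS k ≤ (Cl ^ 7 * (Cl ^ 3 / β) ^ (t - k)) ^ (1 - α) :=
        Real.rpow_le_rpow (div_nonneg ENNReal.toReal_nonneg hposS.le) hratioS
          (by linarith)
      have h2 : (Cl ^ 7 * (Cl ^ 3 / β) ^ (t - k)) ^ (1 - α) =
          (Cl ^ 7) ^ ((1:ℝ) - α) * ((Cl ^ 3 / β) ^ (t - k)) ^ (1 - α) :=
        Real.mul_rpow (by positivity) (by positivity)
      have h3 : ((Cl ^ 3 / β) ^ (t - k)) ^ ((1:ℝ) - α) = q ^ (t - k) := by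
        rw [aux_pow_rpow (by positivity) (1 - α) (t - k), ← hq]
      have h4 : (Cl ^ 7) ^ ((1:ℝ) - α) ≤ Cl ^ 7 := by
        have := Real.rpow_le_rpow_of_exponent_le hCl7 (show 1 - α ≤ 1 by linarith)
        rwa [Real.rpow_one] at this
      have hqp : (0:ℝ) ≤ q ^ (t - k) := pow_nonneg hq0 _
      rw [h2, h3] at h1
      exact h1.trans (mul_le_mul_of_nonneg_right h4 hqp)
    -- bound Ktilde for the pair (S, Q)
    have hKSQ : NonHomog.Ktilde μ Λ α cS rS ((6:ℝ) ^ b₀ * rB) ≤ P := by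
      rw [aux_Ktilde_unfold μ Λ α cS rS ((6:ℝ) ^ b₀ * rB), ← hMQdef]
      have h1 : ∑ j ∈ Finset.Ioc 0 MQ, auxD μ Λ α cS rS j ≤
          ∑ j ∈ Finset.Ioc 0 (t + 2), auxD μ Λ α cS rS j :=
        Finset.sum_le_sum_of_subset_of_nonneg
          (Finset.Ioc_subset_Ioc le_rfl hMQle)
          (fun j _ _ => aux_D_nonneg hUD α cS hrS j)
      have hsplit : ∑ j ∈ Finset.Ioc 0 (t + 2), auxD μ Λ α cS rS j =
          ((∑ j ∈ Finset.Ioc 0 t, auxD μ Λ α cS rS j) + auxD μ Λ α cS rS (t + 1)) +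
            auxD μ Λ α cS rS (t + 2) := by
        rw [show t + 2 = (t + 1) + 1 by omega,
          Finset.sum_Ioc_succ_top (by omega : 0 ≤ t + 1),
          Finset.sum_Ioc_succ_top (by omega : 0 ≤ t)]
      have h2 : ∑ j ∈ Finset.Ioc 0 t, auxD μ Λ α cS rS j ≤ Cl ^ 7 * c₀ := by
        calc ∑ j ∈ Finset.Ioc 0 t, auxD μ Λ α cS rS j
            ≤ ∑ k ∈ Finset.Ioc 0 t, Cl ^ 7 * q ^ (t - k) := Finset.sum_le_sum hterm
          _ = Cl ^ 7 * ∑ k ∈ Finset.Ioc 0 t, q ^ (t - k) := by rw [Finset.mul_sum]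
          _ ≤ Cl ^ 7 * c₀ := by
              refine mul_le_mul_of_nonneg_left ?_ (by positivity)
              rw [hc₀]
              exact aux_geom hq0 hq1 t
      have h3 : auxD μ Λ α cS rS (t + 1) ≤ 1 := aux_D_le_one hUD hα0 hα1 cS hrS (t + 1)
      have h4 : auxD μ Λ α cS rS (t + 2) ≤ 1 := aux_D_le_one hUD hα0 hα1 cS hrS (t + 2)
      rw [hP]
      rw [hsplit] at h1
      linarith
    have hleg2 := hyp cS rS cB ((6:ℝ) ^ b₀ * rB) hrS (by positivity) hxS hSQ hdS hdQ hKSQ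
    have hleg2' : |F cS rS - F cB ((6:ℝ) ^ b₀ * rB)| ≤ P * Cx :=
      hleg2.trans (mul_le_mul_of_nonneg_right hKSQ hCx.le)
    -- combine
    have htri : |F cB rB - F cS rS| ≤
        |F cB rB - F cB ((6:ℝ) ^ b₀ * rB)| + |F cS rS - F cB ((6:ℝ) ^ b₀ * rB)| := by
      have h1 := abs_sub_le (F cB rB) (F cB ((6:ℝ) ^ b₀ * rB)) (F cS rS)
      have h2 : |F cB ((6:ℝ) ^ b₀ * rB) - F cS rS| =
          |F cS rS - F cB ((6:ℝ) ^ b₀ * rB)| := abs_sub_comm _ _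
      linarith
    have hABC : 3 + (∑ j ∈ Finset.Ioc 0 N, auxD μ Λ α cB rB j) + c₀ ≤
        (3 + c₀) * (1 + ∑ j ∈ Finset.Ioc 0 N, auxD μ Λ α cB rB j) := by nlinarith
    rw [hKBS]
    calc |F cB rB - F cS rS|
        ≤ P * (2 + (∑ j ∈ Finset.Ioc 0 N, auxD μ Λ α cB rB j) + c₀) * Cx + P * Cx := by
          linarith
      _ = P * (3 + (∑ j ∈ Finset.Ioc 0 N, auxD μ Λ α cB rB j) + c₀) * Cx := by ring
      _ ≤ P * ((3 + c₀) * (1 + ∑ j ∈ Finset.Ioc 0 N, auxD μ Λ α cB rB j)) * Cx :=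
          mul_le_mul_of_nonneg_right
            (mul_le_mul_of_nonneg_left hABC hP0.le) hCx.le
      _ = P * (3 + c₀) * (1 + ∑ j ∈ Finset.Ioc 0 N, auxD μ Λ α cB rB j) * Cx := by ring
end
end

section
/- Let (X,d,μ) be a non-homogeneous metric measure space, α ∈ (0,1), and suppose the dominating function λ satisfies the α-weak reverse doubling condition. Then there exists a constant C > 0 such that for all x ∈ X and all r ∈ (0, 2 diam(X)), ∫_{B(x,r)} [λ(y, d(x,y))]^{α−1} dμ(y) ≤ C [λ(x,r)]^α. -/
open MeasureTheory Metric Set Filter ENNReal NNReal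

noncomputable section

/-- Lemma 4.3: local integrability of the kernel `[λ(y, d(x,y))]^{α-1}` under the
`α`-weak reverse doubling condition. -/
theorem statement14 {X : Type*} [MetricSpace X] [MeasurableSpace X] [BorelSpace X]
    (μ : MeasureTheory.Measure X) (Λ : X → ℝ → ℝ) (Cl : ℝ)
    (hGD : NonHomog.GeomDoubling X) (hUD : NonHomog.UpperDoubling μ Λ Cl)
    (α : ℝ) (hα : α ∈ Set.Ioo (0 : ℝ) 1)
    (hWRD : NonHomog.WeakReverseDoubling X Λ α) :
    ∃ C : ℝ, 0 < C ∧ ∀ (x : X) (r : ℝ), 0 < r →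
      ENNReal.ofReal r < 2 * EMetric.diam (Set.univ : Set X) →
      ∫ y in Metric.ball x r, Λ y (dist x y) ^ (α - 1) ∂μ ≤ C * Λ x r ^ α := by
  obtain ⟨Cfun, hC1, hC2, hC3⟩ := hWRD
  obtain ⟨hα0, hα1⟩ := hα
  have hCl1 : (1:ℝ) ≤ Cl := hUD.one_le
  have hCl0 : (0:ℝ) < Cl := lt_of_lt_of_le one_pos hCl1
  set D : ℝ := Cl ^ ((4:ℝ) - α) with hD
  have hD0 : 0 < D := Real.rpow_pos_of_pos hCl0 _
  have hSum : Summable (fun k : ℕ => Cfun ((6:ℝ) ^ (k+1)) ^ (-α)) := hC3 6 (by norm_num)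
  set S : ℝ := ∑' k : ℕ, Cfun ((6:ℝ)^(k+1)) ^ (-α) with hS
  have hS0 : 0 ≤ S :=
    tsum_nonneg fun k => Real.rpow_nonneg (le_trans zero_le_one (hC1 _)) _
  refine ⟨D * (S+1), by positivity, ?_⟩
  intro x r hr hrd
  have hΛr : 0 < Λ x r := hUD.pos x r hr
  have hrk_pos : ∀ k : ℕ, 0 < r / 6^k := fun k => by positivity
  have hCfk0 : ∀ k : ℕ, 0 < Cfun ((6:ℝ)^(k+1)) :=
    fun k => lt_of_lt_of_le one_pos (hC1 _)
  -- reverse doubling inequality at scale k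
  have hCk : ∀ k : ℕ, Cfun ((6:ℝ)^(k+1)) * Λ x (r / 6^(k+1)) ≤ Λ x r := by
    intro k
    have h1 : (0:ℝ) < (6:ℝ)^(k+1) := by positivity
    have h2 : (0:ℝ) < r / 6^(k+1) := hrk_pos (k+1)
    have heq : (6:ℝ)^(k+1) * (r/6^(k+1)) = r := by field_simp
    have h3 : ENNReal.ofReal (r / 6^(k+1)) < 2 * EMetric.diam (Set.univ : Set X) := by
      refine lt_of_le_of_lt (ENNReal.ofReal_le_ofReal ?_) hrd
      exact div_le_self hr.le (one_le_pow₀ (by norm_num))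
    have h4 : (1:ℝ) < (6:ℝ)^(k+1) := one_lt_pow₀ (by norm_num) (Nat.succ_ne_zero k)
    have h5 : ENNReal.ofReal ((6:ℝ)^(k+1)) <
        2 * EMetric.diam (Set.univ : Set X) / ENNReal.ofReal (r / 6^(k+1)) := by
      rw [ENNReal.lt_div_iff_mul_lt (Or.inr ENNReal.ofReal_ne_top)
        (Or.inl ENNReal.ofReal_ne_top)]
      rw [← ENNReal.ofReal_mul h1.le, heq]
      exact hrd
    have := hC2 (r/6^(k+1)) h2 h3 ((6:ℝ)^(k+1)) h4 h5 x
    rwa [heq] at this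
  -- the singleton {x} is null
  have hμx : μ {x} = 0 := by
    have hb : ∀ k : ℕ, μ {x} ≤ ENNReal.ofReal (Λ x r * (Cfun ((6:ℝ)^(k+1)))⁻¹) := by
      intro k
      have h2 : (0:ℝ) < r / 6^(k+1) := hrk_pos (k+1)
      calc μ {x} ≤ μ (Metric.ball x (r/6^(k+1))) :=
            measure_mono (Set.singleton_subset_iff.mpr (Metric.mem_ball_self h2))
        _ ≤ ENNReal.ofReal (Λ x (r/6^(k+1))) := hUD.measure_ball_le _ _ h2
        _ ≤ _ := by
            refine ENNReal.ofReal_le_ofReal ?_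
            rw [← div_eq_mul_inv]
            rw [le_div_iff₀ (hCfk0 k)]
            calc Λ x (r/6^(k+1)) * Cfun ((6:ℝ)^(k+1))
                = Cfun ((6:ℝ)^(k+1)) * Λ x (r/6^(k+1)) := by ring
              _ ≤ Λ x r := hCk k
    have hinv : Filter.Tendsto (fun k : ℕ => (Cfun ((6:ℝ)^(k+1)))⁻¹) atTop (nhds 0) := by
      have h0 : Filter.Tendsto (fun k : ℕ => Cfun ((6:ℝ)^(k+1)) ^ (-α)) atTop (nhds 0) :=
        hSum.tendsto_atTop_zero
      have hc : ContinuousAt (fun t : ℝ => t ^ (α⁻¹)) 0 :=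
        Real.continuousAt_rpow_const 0 _ (Or.inr (by positivity))
      have h1 := hc.tendsto.comp h0
      rw [Real.zero_rpow (by positivity : α⁻¹ ≠ 0)] at h1
      have heq : ∀ k : ℕ, (Cfun ((6:ℝ)^(k+1)) ^ (-α)) ^ α⁻¹ = (Cfun ((6:ℝ)^(k+1)))⁻¹ := by
        intro k
        rw [← Real.rpow_mul (hCfk0 k).le]
        rw [show -α * α⁻¹ = -1 by field_simp]
        exact Real.rpow_neg_one _
      simpa [Function.comp_def, heq] using h1
    have htend : Filter.Tendsto
        (fun k : ℕ => ENNReal.ofReal (Λ x r * (Cfun ((6:ℝ)^(k+1)))⁻¹)) atTop (nhds 0) := by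
      have h2 : Filter.Tendsto (fun k : ℕ => Λ x r * (Cfun ((6:ℝ)^(k+1)))⁻¹) atTop (nhds 0) := by
        simpa using hinv.const_mul (Λ x r)
      have := (ENNReal.continuous_ofReal.tendsto 0).comp h2
      simpa [Function.comp_def] using this
    exact le_antisymm (ge_of_tendsto' htend hb) zero_le
  -- main lintegral estimate
  have key : ∫⁻ y in Metric.ball x r, ENNReal.ofReal ‖Λ y (dist x y) ^ (α - 1)‖ ∂μ ≤
      ENNReal.ofReal (D * (S+1) * Λ x r ^ α) := by
    have hcover : Metric.ball x r \ {x} ⊆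
        ⋃ k : ℕ, (Metric.ball x (r/6^k) \ Metric.ball x (r/6^(k+1))) := by
      intro y hy
      have hd0 : 0 < dist x y := by
        rw [dist_pos]
        exact fun h => hy.2 (by simp [h.symm])
      have hdlt : dist x y < r := by rw [dist_comm]; exact Metric.mem_ball.mp hy.1
      have hex : ∃ n : ℕ, r / 6^(n+1) ≤ dist x y := by
        obtain ⟨n, hn⟩ := pow_unbounded_of_one_lt (r / dist x y) (by norm_num : (1:ℝ) < 6)
        refine ⟨n, ?_⟩
        rw [div_le_iff₀ (by positivity : (0:ℝ) < (6:ℝ)^(n+1))]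
        rw [div_lt_iff₀ hd0] at hn
        have h6 : (6:ℝ)^n ≤ 6^(n+1) := by
          apply pow_le_pow_right₀ (by norm_num) (by omega)
        nlinarith
      set k := Nat.find hex with hkdef
      have hk1 : r / 6^(k+1) ≤ dist x y := Nat.find_spec hex
      have hk2 : dist x y < r / 6^k := by
        rcases Nat.eq_zero_or_pos k with h0 | hpos
        · rw [h0]; simpa using hdlt
        · have hmin := Nat.find_min hex (show k - 1 < k by omega)
          push_neg at hmin
          have : k - 1 + 1 = k := by omega
          rwa [this] at hmin
      refine Set.mem_iUnion.mpr ⟨k, ?_, ?_⟩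
      · rw [Metric.mem_ball, dist_comm]; exact hk2
      · rw [Metric.mem_ball, dist_comm]; exact not_lt.mpr hk1
    have hperk : ∀ k : ℕ,
        ∫⁻ y in Metric.ball x (r/6^k) \ Metric.ball x (r/6^(k+1)),
          ENNReal.ofReal ‖Λ y (dist x y) ^ (α - 1)‖ ∂μ ≤
        ENNReal.ofReal (D * Λ x r ^ α * Cfun ((6:ℝ)^(k+1)) ^ (-α)) := by
      intro k
      have h2 : (0:ℝ) < r / 6^(k+1) := hrk_pos (k+1)
      have hΛk1 : 0 < Λ x (r/6^(k+1)) := hUD.pos x _ h2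
      have hmeas : MeasurableSet (Metric.ball x (r/6^k) \ Metric.ball x (r/6^(k+1))) :=
        measurableSet_ball.diff measurableSet_ball
      have hpoint : ∀ y ∈ Metric.ball x (r/6^k) \ Metric.ball x (r/6^(k+1)),
          ENNReal.ofReal ‖Λ y (dist x y) ^ (α - 1)‖ ≤
          ENNReal.ofReal (Cl ^ ((1:ℝ)-α) * Λ x (r/6^(k+1)) ^ (α-1)) := by
        intro y hy
        have hd1 : r / 6^(k+1) ≤ dist x y := by
          have := hy.2
          rw [Metric.mem_ball, dist_comm] at this
          exact not_lt.mp this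
        have hd0 : 0 < dist x y := lt_of_lt_of_le h2 hd1
        have hΛyd : 0 < Λ y (dist x y) := hUD.pos y _ hd0
        have hΛxd : 0 < Λ x (dist x y) := hUD.pos x _ hd0
        have hcompat : Λ x (dist x y) ≤ Cl * Λ y (dist x y) :=
          hUD.compat x y (dist x y) hd0 le_rfl
        have hq : Λ x (dist x y) / Cl ≤ Λ y (dist x y) := by
          rw [div_le_iff₀ hCl0]; nlinarith
        have hstep1 : Λ y (dist x y) ^ (α-1) ≤ (Λ x (dist x y) / Cl) ^ (α-1) :=
          Real.rpow_le_rpow_of_nonpos (div_pos hΛxd hCl0) hq (by linarith)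
        have hstep2 : (Λ x (dist x y) / Cl) ^ (α-1) =
            Λ x (dist x y) ^ (α-1) * Cl ^ ((1:ℝ)-α) := by
          rw [Real.div_rpow hΛxd.le hCl0.le, div_eq_mul_inv, ← Real.rpow_neg hCl0.le,
            neg_sub]
        have hstep3 : Λ x (dist x y) ^ (α-1) ≤ Λ x (r/6^(k+1)) ^ (α-1) :=
          Real.rpow_le_rpow_of_nonpos hΛk1
            (hUD.mono x (Set.mem_Ioi.mpr h2) (Set.mem_Ioi.mpr hd0) hd1) (by linarith)
        refine ENNReal.ofReal_le_ofReal ?_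
        rw [Real.norm_eq_abs, abs_of_pos (Real.rpow_pos_of_pos hΛyd _)]
        calc Λ y (dist x y) ^ (α-1) ≤ Λ x (dist x y) ^ (α-1) * Cl ^ ((1:ℝ)-α) := by
              rw [← hstep2]; exact hstep1
          _ ≤ Λ x (r/6^(k+1)) ^ (α-1) * Cl ^ ((1:ℝ)-α) := by
              apply mul_le_mul_of_nonneg_right hstep3 (Real.rpow_nonneg hCl0.le _)
          _ = Cl ^ ((1:ℝ)-α) * Λ x (r/6^(k+1)) ^ (α-1) := by ring
      -- real-number estimate for the constant
      have hreal : Cl ^ ((1:ℝ)-α) * Λ x (r/6^(k+1)) ^ (α-1) * Λ x (r/6^k) ≤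
          D * Λ x r ^ α * Cfun ((6:ℝ)^(k+1)) ^ (-α) := by
        set t := Λ x (r/6^(k+1)) with ht
        have htpos : 0 < t := hΛk1
        have hk0 : (0:ℝ) < r / 6^k := hrk_pos k
        have l1 : Λ x (r/6^k) ≤ Cl * Λ x (r/6^k/2) := hUD.le_mul_half x _ hk0
        have l2 : Λ x (r/6^k/2) ≤ Cl * Λ x (r/6^k/2/2) := hUD.le_mul_half x _ (by positivity)
        have l3 : Λ x (r/6^k/2/2) ≤ Cl * Λ x (r/6^k/2/2/2) :=
          hUD.le_mul_half x _ (by positivity)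
        have l4 : Λ x (r/6^k/2/2/2) ≤ t := by
          rw [ht]
          apply hUD.mono x (Set.mem_Ioi.mpr (by positivity)) (Set.mem_Ioi.mpr h2)
          rw [show r/6^k/2/2/2 = r/(6^k*8) by ring,
            show r/6^(k+1) = r/(6^k*6) by rw [pow_succ]]
          apply div_le_div_of_nonneg_left hr.le (by positivity)
          have : (0:ℝ) < 6^k := by positivity
          nlinarith
        have h8 : Λ x (r/6^k) ≤ Cl * (Cl * (Cl * t)) := by
          have p2 : Λ x (r/6^k/2) ≤ Cl * (Cl * t) := by
            refine le_trans l2 ?_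
            have : Λ x (r/6^k/2/2) ≤ Cl * t := le_trans l3 (by nlinarith)
            nlinarith
          refine le_trans l1 (by nlinarith)
        have h10 : t ^ α ≤ Λ x r ^ α * Cfun ((6:ℝ)^(k+1)) ^ (-α) := by
          have htle : t ≤ Λ x r / Cfun ((6:ℝ)^(k+1)) := by
            rw [le_div_iff₀ (hCfk0 k)]
            calc t * Cfun ((6:ℝ)^(k+1)) = Cfun ((6:ℝ)^(k+1)) * t := by ring
              _ ≤ Λ x r := hCk k
          calc t ^ α ≤ (Λ x r / Cfun ((6:ℝ)^(k+1))) ^ α :=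
              Real.rpow_le_rpow htpos.le htle hα0.le
            _ = Λ x r ^ α * Cfun ((6:ℝ)^(k+1)) ^ (-α) := by
              rw [Real.div_rpow hΛr.le (hCfk0 k).le, div_eq_mul_inv,
                Real.rpow_neg (hCfk0 k).le]
        have e1 : t ^ (α-1) * t = t ^ α := by
          rw [← Real.rpow_add_one htpos.ne' (α-1)]
          ring_nf
        have e2 : Cl ^ ((1:ℝ)-α) * (Cl*Cl*Cl) = D := by
          have h3' : Cl*Cl*Cl = Cl ^ ((3:ℝ)) := by
            rw [show ((3:ℝ)) = ((3:ℕ):ℝ) by norm_num, Real.rpow_natCast]; ring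
          rw [h3', ← Real.rpow_add hCl0, hD]
          congr 1; ring
        have htα1 : 0 < t ^ (α-1) := Real.rpow_pos_of_pos htpos _
        have hClα : 0 < Cl ^ ((1:ℝ)-α) := Real.rpow_pos_of_pos hCl0 _
        calc Cl ^ ((1:ℝ)-α) * t ^ (α-1) * Λ x (r/6^k)
            ≤ Cl ^ ((1:ℝ)-α) * t ^ (α-1) * (Cl * (Cl * (Cl * t))) := by
              apply mul_le_mul_of_nonneg_left h8 (by positivity)
          _ = (Cl ^ ((1:ℝ)-α) * (Cl*Cl*Cl)) * (t ^ (α-1) * t) := by ring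
          _ = D * t ^ α := by rw [e1, e2]
          _ ≤ D * (Λ x r ^ α * Cfun ((6:ℝ)^(k+1)) ^ (-α)) :=
              mul_le_mul_of_nonneg_left h10 hD0.le
          _ = D * Λ x r ^ α * Cfun ((6:ℝ)^(k+1)) ^ (-α) := by ring
      calc ∫⁻ y in Metric.ball x (r/6^k) \ Metric.ball x (r/6^(k+1)),
            ENNReal.ofReal ‖Λ y (dist x y) ^ (α - 1)‖ ∂μ
          ≤ ∫⁻ _ in Metric.ball x (r/6^k) \ Metric.ball x (r/6^(k+1)),
            ENNReal.ofReal (Cl ^ ((1:ℝ)-α) * Λ x (r/6^(k+1)) ^ (α-1)) ∂μ :=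
            setLIntegral_mono' hmeas hpoint
        _ = ENNReal.ofReal (Cl ^ ((1:ℝ)-α) * Λ x (r/6^(k+1)) ^ (α-1)) *
            μ (Metric.ball x (r/6^k) \ Metric.ball x (r/6^(k+1))) :=
            setLIntegral_const _ _
        _ ≤ ENNReal.ofReal (Cl ^ ((1:ℝ)-α) * Λ x (r/6^(k+1)) ^ (α-1)) *
            ENNReal.ofReal (Λ x (r/6^k)) := by
            apply mul_le_mul_right
            exact le_trans (measure_mono Set.diff_subset) (hUD.measure_ball_le x _ (hrk_pos k))
        _ = ENNReal.ofReal (Cl ^ ((1:ℝ)-α) * Λ x (r/6^(k+1)) ^ (α-1) * Λ x (r/6^k)) := by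
            rw [← ENNReal.ofReal_mul]
            positivity
        _ ≤ ENNReal.ofReal (D * Λ x r ^ α * Cfun ((6:ℝ)^(k+1)) ^ (-α)) :=
            ENNReal.ofReal_le_ofReal hreal
    have hsum_u : Summable (fun k : ℕ => D * Λ x r ^ α * Cfun ((6:ℝ)^(k+1)) ^ (-α)) := by
      simpa [mul_assoc] using (hSum.mul_left (D * Λ x r ^ α))
    have hu_nonneg : ∀ k : ℕ, 0 ≤ D * Λ x r ^ α * Cfun ((6:ℝ)^(k+1)) ^ (-α) := by
      intro k
      have := Real.rpow_nonneg hΛr.le α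
      have := Real.rpow_nonneg (hCfk0 k).le (-α)
      positivity
    calc ∫⁻ y in Metric.ball x r, ENNReal.ofReal ‖Λ y (dist x y) ^ (α - 1)‖ ∂μ
        = ∫⁻ y in Metric.ball x r \ {x}, ENNReal.ofReal ‖Λ y (dist x y) ^ (α - 1)‖ ∂μ :=
          (setLIntegral_congr (diff_null_ae_eq_self hμx)).symm
      _ ≤ ∫⁻ y in ⋃ k : ℕ, (Metric.ball x (r/6^k) \ Metric.ball x (r/6^(k+1))),
            ENNReal.ofReal ‖Λ y (dist x y) ^ (α - 1)‖ ∂μ :=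
          lintegral_mono_set hcover
      _ ≤ ∑' k : ℕ, ∫⁻ y in Metric.ball x (r/6^k) \ Metric.ball x (r/6^(k+1)),
            ENNReal.ofReal ‖Λ y (dist x y) ^ (α - 1)‖ ∂μ :=
          lintegral_iUnion_le _ _
      _ ≤ ∑' k : ℕ, ENNReal.ofReal (D * Λ x r ^ α * Cfun ((6:ℝ)^(k+1)) ^ (-α)) :=
          ENNReal.tsum_le_tsum hperk
      _ = ENNReal.ofReal (∑' k : ℕ, D * Λ x r ^ α * Cfun ((6:ℝ)^(k+1)) ^ (-α)) :=
          (ENNReal.ofReal_tsum_of_nonneg hu_nonneg hsum_u).symm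
      _ ≤ ENNReal.ofReal (D * (S+1) * Λ x r ^ α) := by
          apply ENNReal.ofReal_le_ofReal
          rw [_root_.tsum_mul_left]
          have hΛα : 0 < Λ x r ^ α := Real.rpow_pos_of_pos hΛr α
          nlinarith
  -- conclude
  have hnorm := norm_integral_le_lintegral_norm
    (μ := μ.restrict (Metric.ball x r)) (fun y => Λ y (dist x y) ^ (α - 1))
  have hRHS : (0:ℝ) ≤ D * (S+1) * Λ x r ^ α :=
    mul_nonneg (by positivity) (Real.rpow_nonneg hΛr.le α)
  calc ∫ y in Metric.ball x r, Λ y (dist x y) ^ (α - 1) ∂μ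
      ≤ ‖∫ y in Metric.ball x r, Λ y (dist x y) ^ (α - 1) ∂μ‖ := le_abs_self _
    _ ≤ (∫⁻ y in Metric.ball x r, ENNReal.ofReal ‖Λ y (dist x y) ^ (α - 1)‖ ∂μ).toReal :=
        hnorm
    _ ≤ (ENNReal.ofReal (D * (S+1) * Λ x r ^ α)).toReal :=
        ENNReal.toReal_mono ENNReal.ofReal_ne_top key
    _ = D * (S+1) * Λ x r ^ α := ENNReal.toReal_ofReal hRHS
end
end
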